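/- arXiv:2509.08466 — 5 statements merged into one kernel-verified Lean document; each statement's English description precedes it below -/
import Mathlib

section
/- Let ρ : (0,∞) → [0,∞) be a nonnegative function in L¹((0,∞)) with ‖ρ‖_{L¹} < 1, and let r : (0,∞) → [0,∞) be a nonnegative function in L¹((0,∞)) satisfying the linear Volterra equation r(t) = ρ(t) + ∫_0^t r(t−s) ρ(s) ds for almost every t > 0. Then for every T > 0 and every κ ∈ (0,1): ∫_T^∞ r(t) dt ≤ ‖r‖_{L¹} · T^{−log(1/‖ρ‖_{L¹})} + ((1 + 2‖r‖_{L¹}) / (1 − ‖ρ‖_{L¹})) · ∫_{κ T^{1+log(1−κ)}}^∞ ρ(t) dt, where log denotes the natural logarithm. -/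
open MeasureTheory Set
open scoped ENNReal

lemma tail_rec_aux
    (ρ r : ℝ → ℝ)
    (hρmeas : Measurable ρ) (hrmeas : Measurable r)
    (hρ0 : ∀ t ∈ Set.Ioi (0 : ℝ), 0 ≤ ρ t)
    (hr0 : ∀ t ∈ Set.Ioi (0 : ℝ), 0 ≤ r t)
    (hρint : IntegrableOn ρ (Set.Ioi 0))
    (hrint : IntegrableOn r (Set.Ioi 0))
    (hVolterra : ∀ᵐ t ∂(volume.restrict (Set.Ioi (0 : ℝ))),
        r t = ρ t + ∫ s in (0 : ℝ)..t, r (t - s) * ρ s)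
    (a b : ℝ) (ha : 0 < a) (hb : 0 < b) :
    (∫ t in Set.Ioi (a + b), r t) ≤ (∫ t in Set.Ioi (a + b), ρ t)
      + (∫ t in Set.Ioi (0 : ℝ), ρ t) * (∫ t in Set.Ioi b, r t)
      + (∫ t in Set.Ioi (0 : ℝ), r t) * (∫ t in Set.Ioi a, ρ t) := by
  set S : ℝ := a + b with hS
  have hS0 : (0 : ℝ) < S := by positivity
  have hsub : Set.Ioi S ⊆ Set.Ioi (0 : ℝ) := Ioi_subset_Ioi hS0.le
  -- a.e. facts on Ioi S
  have hae1 : ∀ᵐ t ∂(volume.restrict (Set.Ioi S)),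
      r t = ρ t + ∫ s in (0 : ℝ)..t, r (t - s) * ρ s :=
    ae_restrict_of_ae_restrict_of_subset hsub hVolterra
  have haemem : ∀ᵐ t ∂(volume.restrict (Set.Ioi S)), t ∈ Set.Ioi S :=
    ae_restrict_mem measurableSet_Ioi
  -- nonnegativity of the convolution term
  have hC_nonneg : ∀ t : ℝ, 0 < t → 0 ≤ ∫ s in (0 : ℝ)..t, r (t - s) * ρ s := by
    intro t ht
    by_cases hInt : IntervalIntegrable (fun s => r (t - s) * ρ s) volume 0 t
    · rw [intervalIntegral.integral_of_le ht.le, integral_Ioc_eq_integral_Ioo]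
      apply setIntegral_nonneg measurableSet_Ioo
      intro s hs
      exact mul_nonneg (hr0 _ (by simp [mem_Ioi]; linarith [hs.1, hs.2]))
        (hρ0 _ hs.1)
    · rw [intervalIntegral.integral_undef hInt]
  have hnn : ∀ᵐ t ∂(volume.restrict (Set.Ioi S)), 0 ≤ r t - ρ t := by
    filter_upwards [hae1, haemem] with t heq ht
    have := hC_nonneg t (lt_trans hS0 ht)
    linarith
  -- the pointwise lintegral bound
  have hptw : ∀ᵐ t ∂(volume.restrict (Set.Ioi S)),
      ENNReal.ofReal (r t - ρ t) ≤
        ∫⁻ s in Set.Ioo 0 t, ENNReal.ofReal (r (t - s)) * ENNReal.ofReal (ρ s) := by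
    filter_upwards [hae1, haemem] with t heq ht
    have ht0 : (0 : ℝ) < t := lt_trans hS0 ht
    have hrw : r t - ρ t = ∫ s in (0 : ℝ)..t, r (t - s) * ρ s := by linarith
    rw [hrw]
    by_cases hInt : IntervalIntegrable (fun s => r (t - s) * ρ s) volume 0 t
    · rw [intervalIntegral.integral_of_le ht0.le, integral_Ioc_eq_integral_Ioo]
      have hIoo : IntegrableOn (fun s => r (t - s) * ρ s) (Set.Ioo 0 t) volume :=
        ((intervalIntegrable_iff_integrableOn_Ioc_of_le ht0.le).1 hInt).mono_set
          Ioo_subset_Ioc_self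
      have hnn' : 0 ≤ᵐ[volume.restrict (Set.Ioo 0 t)] fun s => r (t - s) * ρ s := by
        refine (ae_restrict_iff' measurableSet_Ioo).2 (Filter.Eventually.of_forall ?_)
        intro s hs
        exact mul_nonneg (hr0 _ (by simp [mem_Ioi]; linarith [hs.1, hs.2])) (hρ0 _ hs.1)
      rw [ofReal_integral_eq_lintegral_ofReal hIoo hnn']
      apply lintegral_mono_ae
      refine (ae_restrict_iff' measurableSet_Ioo).2 (Filter.Eventually.of_forall ?_)
      intro s hs
      rw [ENNReal.ofReal_mul (hr0 _ (by simp [mem_Ioi]; linarith [hs.1, hs.2]))]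
    · rw [intervalIntegral.integral_undef hInt]
      simp
  -- notation
  set A : ℝ := ∫ t in Set.Ioi (0 : ℝ), ρ t with hA
  set R : ℝ := ∫ t in Set.Ioi (0 : ℝ), r t with hR
  set Rb : ℝ := ∫ t in Set.Ioi b, r t with hRb
  set Pa : ℝ := ∫ t in Set.Ioi a, ρ t with hPa
  -- indicator functions
  set cρ : ℝ → ℝ≥0∞ := (Set.Ioi (0:ℝ)).indicator (fun s => ENNReal.ofReal (ρ s)) with hcρ
  set cρa : ℝ → ℝ≥0∞ := (Set.Ioi a).indicator (fun s => ENNReal.ofReal (ρ s)) with hcρa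
  set cr0 : ℝ → ℝ≥0∞ := (Set.Ioi (0:ℝ)).indicator (fun u => ENNReal.ofReal (r u)) with hcr0
  set crb : ℝ → ℝ≥0∞ := (Set.Ioi b).indicator (fun u => ENNReal.ofReal (r u)) with hcrb
  have hmρ : Measurable cρ := (ENNReal.measurable_ofReal.comp hρmeas).indicator measurableSet_Ioi
  have hmρa : Measurable cρa := (ENNReal.measurable_ofReal.comp hρmeas).indicator measurableSet_Ioi
  have hmr0 : Measurable cr0 := (ENNReal.measurable_ofReal.comp hrmeas).indicator measurableSet_Ioi
  have hmrb : Measurable crb := (ENNReal.measurable_ofReal.comp hrmeas).indicator measurableSet_Ioi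
  -- nonneg a.e. restrictions
  have hρnn : 0 ≤ᵐ[volume.restrict (Set.Ioi (0:ℝ))] ρ :=
    (ae_restrict_iff' measurableSet_Ioi).2 (Filter.Eventually.of_forall hρ0)
  have hrnn : 0 ≤ᵐ[volume.restrict (Set.Ioi (0:ℝ))] r :=
    (ae_restrict_iff' measurableSet_Ioi).2 (Filter.Eventually.of_forall hr0)
  have hρann : 0 ≤ᵐ[volume.restrict (Set.Ioi a)] ρ :=
    (ae_restrict_iff' measurableSet_Ioi).2
      (Filter.Eventually.of_forall fun x hx => hρ0 x (lt_trans ha hx))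
  have hrbnn : 0 ≤ᵐ[volume.restrict (Set.Ioi b)] r :=
    (ae_restrict_iff' measurableSet_Ioi).2
      (Filter.Eventually.of_forall fun x hx => hr0 x (lt_trans hb hx))
  -- lintegral values
  have hlρ : ∫⁻ s, cρ s = ENNReal.ofReal A := by
    rw [hcρ, lintegral_indicator measurableSet_Ioi,
      ← ofReal_integral_eq_lintegral_ofReal hρint hρnn]
  have hlρa : ∫⁻ s, cρa s = ENNReal.ofReal Pa := by
    rw [hcρa, lintegral_indicator measurableSet_Ioi,
      ← ofReal_integral_eq_lintegral_ofReal (hρint.mono_set (Ioi_subset_Ioi ha.le)) hρann]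
  have hlr0 : ∫⁻ u, cr0 u = ENNReal.ofReal R := by
    rw [hcr0, lintegral_indicator measurableSet_Ioi,
      ← ofReal_integral_eq_lintegral_ofReal hrint hrnn]
  have hlrb : ∫⁻ u, crb u = ENNReal.ofReal Rb := by
    rw [hcrb, lintegral_indicator measurableSet_Ioi,
      ← ofReal_integral_eq_lintegral_ofReal (hrint.mono_set (Ioi_subset_Ioi hb.le)) hrbnn]
  -- pointwise domination
  have hdom : ∀ t ∈ Set.Ioi S, ∀ s ∈ Set.Ioo (0:ℝ) t,
      ENNReal.ofReal (r (t - s)) * ENNReal.ofReal (ρ s) ≤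
        cρ s * crb (t - s) + cρa s * cr0 (t - s) := by
    intro t ht s hs
    by_cases hsa : s ≤ a
    · have h1 : b < t - s := by
        simp only [mem_Ioi] at ht; linarith
      have : cρ s * crb (t - s) = ENNReal.ofReal (r (t - s)) * ENNReal.ofReal (ρ s) := by
        rw [hcρ, hcrb, indicator_of_mem (mem_Ioi.2 hs.1 : s ∈ Set.Ioi (0:ℝ)),
          indicator_of_mem (mem_Ioi.2 h1), mul_comm]
      rw [← this]; exact le_self_add
    · push_neg at hsa
      have h2 : (0:ℝ) < t - s := by linarith [hs.2]
      have : cρa s * cr0 (t - s) = ENNReal.ofReal (r (t - s)) * ENNReal.ofReal (ρ s) := by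
        rw [hcρa, hcr0, indicator_of_mem (mem_Ioi.2 hsa), indicator_of_mem (mem_Ioi.2 h2),
          mul_comm]
      rw [← this]; exact le_add_self
  -- double integral bound
  have hdouble : (∫⁻ t in Set.Ioi S, ∫⁻ s in Set.Ioo 0 t,
      ENNReal.ofReal (r (t - s)) * ENNReal.ofReal (ρ s)) ≤
      ENNReal.ofReal A * ENNReal.ofReal Rb + ENNReal.ofReal Pa * ENNReal.ofReal R := by
    have step1 : (∫⁻ t in Set.Ioi S, ∫⁻ s in Set.Ioo 0 t,
        ENNReal.ofReal (r (t - s)) * ENNReal.ofReal (ρ s)) ≤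
        ∫⁻ t, ∫⁻ s, (cρ s * crb (t - s) + cρa s * cr0 (t - s)) := by
      refine le_trans (lintegral_mono_ae ?_) (setLIntegral_le_lintegral _ _)
      filter_upwards [ae_restrict_mem (measurableSet_Ioi : MeasurableSet (Set.Ioi S))] with t ht
      refine le_trans (lintegral_mono_ae ?_) (setLIntegral_le_lintegral _ _)
      refine (ae_restrict_iff' measurableSet_Ioo).2 (Filter.Eventually.of_forall ?_)
      intro s hs
      exact hdom t ht s hs
    have hmeas2 : Measurable (Function.uncurry
        (fun t s => cρ s * crb (t - s) + cρa s * cr0 (t - s))) := by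
      apply Measurable.add
      · exact (hmρ.comp measurable_snd).mul (hmrb.comp (measurable_fst.sub measurable_snd))
      · exact (hmρa.comp measurable_snd).mul (hmr0.comp (measurable_fst.sub measurable_snd))
    have step2 : (∫⁻ t, ∫⁻ s, (cρ s * crb (t - s) + cρa s * cr0 (t - s)))
        = ∫⁻ s, ∫⁻ t, (cρ s * crb (t - s) + cρa s * cr0 (t - s)) :=
      lintegral_lintegral_swap hmeas2.aemeasurable
    have step3 : ∀ s : ℝ, (∫⁻ t, (cρ s * crb (t - s) + cρa s * cr0 (t - s)))
        = cρ s * ENNReal.ofReal Rb + cρa s * ENNReal.ofReal R := by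
      intro s
      have m1 : Measurable (fun t : ℝ => crb (t - s)) :=
        hmrb.comp (measurable_id.sub measurable_const)
      have m2 : Measurable (fun t : ℝ => cr0 (t - s)) :=
        hmr0.comp (measurable_id.sub measurable_const)
      rw [lintegral_add_left (m1.const_mul _), lintegral_const_mul _ m1,
        lintegral_const_mul _ m2]
      have e1 : (∫⁻ t, crb (t - s)) = ENNReal.ofReal Rb := by
        rw [(measurePreserving_sub_right volume s).lintegral_comp hmrb, hlrb]
      have e2 : (∫⁻ t, cr0 (t - s)) = ENNReal.ofReal R := by
        rw [(measurePreserving_sub_right volume s).lintegral_comp hmr0, hlr0]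
      rw [e1, e2]
    calc (∫⁻ t in Set.Ioi S, ∫⁻ s in Set.Ioo 0 t,
        ENNReal.ofReal (r (t - s)) * ENNReal.ofReal (ρ s))
        ≤ ∫⁻ s, ∫⁻ t, (cρ s * crb (t - s) + cρa s * cr0 (t - s)) := step2 ▸ step1
      _ = ∫⁻ s, (cρ s * ENNReal.ofReal Rb + cρa s * ENNReal.ofReal R) := by
            exact lintegral_congr step3
      _ = ENNReal.ofReal A * ENNReal.ofReal Rb + ENNReal.ofReal Pa * ENNReal.ofReal R := by
            rw [lintegral_add_left (hmρ.mul_const _),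
              lintegral_mul_const _ hmρ, lintegral_mul_const _ hmρa, hlρ, hlρa]
  -- combine
  have hintS_r : IntegrableOn r (Set.Ioi S) := hrint.mono_set hsub
  have hintS_ρ : IntegrableOn ρ (Set.Ioi S) := hρint.mono_set hsub
  have hsplit : (∫ t in Set.Ioi S, r t)
      = (∫ t in Set.Ioi S, ρ t) + ∫ t in Set.Ioi S, (r t - ρ t) := by
    rw [integral_sub hintS_r hintS_ρ]; ring
  have hkey : (∫ t in Set.Ioi S, (r t - ρ t)) ≤ A * Rb + R * Pa := by
    have hmeasd : AEStronglyMeasurable (fun t => r t - ρ t)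
        (volume.restrict (Set.Ioi S)) := ((hrmeas.sub hρmeas).aestronglyMeasurable)
    rw [integral_eq_lintegral_of_nonneg_ae hnn hmeasd]
    have hle : (∫⁻ t in Set.Ioi S, ENNReal.ofReal (r t - ρ t)) ≤
        ENNReal.ofReal A * ENNReal.ofReal Rb + ENNReal.ofReal Pa * ENNReal.ofReal R :=
      le_trans (lintegral_mono_ae hptw) hdouble
    have hA0 : 0 ≤ A := setIntegral_nonneg measurableSet_Ioi hρ0
    have hR0 : 0 ≤ R := setIntegral_nonneg measurableSet_Ioi hr0
    have hRb0 : 0 ≤ Rb := setIntegral_nonneg_of_ae_restrict hrbnn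
    have hPa0 : 0 ≤ Pa := setIntegral_nonneg_of_ae_restrict hρann
    calc (∫⁻ t in Set.Ioi S, ENNReal.ofReal (r t - ρ t)).toReal
        ≤ (ENNReal.ofReal A * ENNReal.ofReal Rb + ENNReal.ofReal Pa * ENNReal.ofReal R).toReal := by
          apply ENNReal.toReal_mono _ hle
          simp [ENNReal.mul_eq_top]
      _ = A * Rb + R * Pa := by
          rw [ENNReal.toReal_add (by simp [ENNReal.mul_eq_top]) (by simp [ENNReal.mul_eq_top])]
          rw [ENNReal.toReal_mul, ENNReal.toReal_mul]
          rw [ENNReal.toReal_ofReal hA0, ENNReal.toReal_ofReal hR0,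
            ENNReal.toReal_ofReal hRb0, ENNReal.toReal_ofReal hPa0]
          ring
  linarith [hsplit, hkey]

lemma tail_iter_aux
    (ρ r : ℝ → ℝ)
    (hρmeas : Measurable ρ) (hrmeas : Measurable r)
    (hρ0 : ∀ t ∈ Set.Ioi (0 : ℝ), 0 ≤ ρ t)
    (hr0 : ∀ t ∈ Set.Ioi (0 : ℝ), 0 ≤ r t)
    (hρint : IntegrableOn ρ (Set.Ioi 0))
    (hrint : IntegrableOn r (Set.Ioi 0))
    (hVolterra : ∀ᵐ t ∂(volume.restrict (Set.Ioi (0 : ℝ))),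
        r t = ρ t + ∫ s in (0 : ℝ)..t, r (t - s) * ρ s)
    (κ : ℝ) (hκ : κ ∈ Set.Ioo (0 : ℝ) 1) :
    ∀ m : ℕ, ∀ S : ℝ, 0 < S → ∀ c : ℝ, 0 < c → (∀ k < m, c ≤ κ * (1 - κ) ^ k * S) →
      (∫ t in Set.Ioi S, r t) ≤
        (∫ t in Set.Ioi (0 : ℝ), ρ t) ^ m * (∫ t in Set.Ioi ((1 - κ) ^ m * S), r t)
          + (1 + ∫ t in Set.Ioi (0 : ℝ), r t) * (∫ t in Set.Ioi c, ρ t)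
              * ∑ k ∈ Finset.range m, (∫ t in Set.Ioi (0 : ℝ), ρ t) ^ k := by
  obtain ⟨hκ0, hκ1⟩ := hκ
  have h1κ : 0 < 1 - κ := by linarith
  have hA0 : 0 ≤ ∫ t in Set.Ioi (0 : ℝ), ρ t := setIntegral_nonneg measurableSet_Ioi hρ0
  have hR0 : 0 ≤ ∫ t in Set.Ioi (0 : ℝ), r t := setIntegral_nonneg measurableSet_Ioi hr0
  have hPmono : ∀ x y : ℝ, 0 < x → x ≤ y →
      (∫ t in Set.Ioi y, ρ t) ≤ ∫ t in Set.Ioi x, ρ t := by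
    intro x y hx hxy
    refine setIntegral_mono_set (hρint.mono_set (Ioi_subset_Ioi hx.le)) ?_
      ((Ioi_subset_Ioi hxy).eventuallyLE)
    exact (ae_restrict_iff' measurableSet_Ioi).2
      (Filter.Eventually.of_forall fun t ht => hρ0 t (lt_trans hx ht))
  intro m
  induction m with
  | zero =>
      intro S hS c hc _
      simp
  | succ m ih =>
      intro S hS c hc hck
      have hrec := tail_rec_aux ρ r hρmeas hrmeas hρ0 hr0 hρint hrint hVolterra
        (κ * S) ((1 - κ) * S) (by positivity) (by positivity)
      have hSsum : κ * S + (1 - κ) * S = S := by ring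
      rw [hSsum] at hrec
      -- tail of ρ at S is ≤ tail at c, tail at κS ≤ tail at c
      have hcS : c ≤ κ * S := by
        have := hck 0 (Nat.succ_pos m); simpa using this
      have h1 : (∫ t in Set.Ioi S, ρ t) ≤ ∫ t in Set.Ioi c, ρ t :=
        hPmono c S hc (le_trans hcS (by nlinarith))
      have h2 : (∫ t in Set.Ioi (κ * S), ρ t) ≤ ∫ t in Set.Ioi c, ρ t :=
        hPmono c (κ * S) hc hcS
      have hih := ih ((1 - κ) * S) (by positivity) c hc
        (by
          intro k hk
          have := hck (k + 1) (Nat.succ_lt_succ hk)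
          calc c ≤ κ * (1 - κ) ^ (k + 1) * S := this
            _ = κ * (1 - κ) ^ k * ((1 - κ) * S) := by ring)
      have hpow : (1 - κ) ^ m * ((1 - κ) * S) = (1 - κ) ^ (m + 1) * S := by ring
      rw [hpow] at hih
      have hPc0 : 0 ≤ ∫ t in Set.Ioi c, ρ t :=
        setIntegral_nonneg measurableSet_Ioi fun t ht => hρ0 t (lt_trans hc ht)
      -- multiply ih by A and combine
      have hmul := mul_le_mul_of_nonneg_left hih hA0
      have hgeom : (1 : ℝ) + (∫ t in Set.Ioi (0 : ℝ), ρ t) *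
          ∑ k ∈ Finset.range m, (∫ t in Set.Ioi (0 : ℝ), ρ t) ^ k
          = ∑ k ∈ Finset.range (m + 1), (∫ t in Set.Ioi (0 : ℝ), ρ t) ^ k := by
        rw [geom_sum_succ]; ring
      calc (∫ t in Set.Ioi S, r t)
          ≤ (∫ t in Set.Ioi S, ρ t) + (∫ t in Set.Ioi (0 : ℝ), ρ t) * (∫ t in Set.Ioi ((1-κ)*S), r t)
              + (∫ t in Set.Ioi (0 : ℝ), r t) * (∫ t in Set.Ioi (κ * S), ρ t) := hrec
        _ ≤ (∫ t in Set.Ioi c, ρ t) + (∫ t in Set.Ioi (0 : ℝ), ρ t) * (∫ t in Set.Ioi ((1-κ)*S), r t)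
              + (∫ t in Set.Ioi (0 : ℝ), r t) * (∫ t in Set.Ioi c, ρ t) := by
            have := mul_le_mul_of_nonneg_left h2 hR0
            linarith
        _ ≤ (∫ t in Set.Ioi c, ρ t)
              + ((∫ t in Set.Ioi (0 : ℝ), ρ t) ^ (m + 1) * (∫ t in Set.Ioi ((1-κ)^(m+1)*S), r t)
                + (∫ t in Set.Ioi (0 : ℝ), ρ t) * ((1 + ∫ t in Set.Ioi (0 : ℝ), r t) * (∫ t in Set.Ioi c, ρ t)
                  * ∑ k ∈ Finset.range m, (∫ t in Set.Ioi (0 : ℝ), ρ t) ^ k))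
              + (∫ t in Set.Ioi (0 : ℝ), r t) * (∫ t in Set.Ioi c, ρ t) := by
            have h3 : (∫ t in Set.Ioi (0 : ℝ), ρ t) * (∫ t in Set.Ioi ((1-κ)*S), r t)
                ≤ (∫ t in Set.Ioi (0 : ℝ), ρ t) ^ (m + 1) * (∫ t in Set.Ioi ((1-κ)^(m+1)*S), r t)
                + (∫ t in Set.Ioi (0 : ℝ), ρ t) * ((1 + ∫ t in Set.Ioi (0 : ℝ), r t) * (∫ t in Set.Ioi c, ρ t)
                  * ∑ k ∈ Finset.range m, (∫ t in Set.Ioi (0 : ℝ), ρ t) ^ k) := by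
              calc (∫ t in Set.Ioi (0 : ℝ), ρ t) * (∫ t in Set.Ioi ((1-κ)*S), r t)
                  ≤ (∫ t in Set.Ioi (0 : ℝ), ρ t) * ((∫ t in Set.Ioi (0 : ℝ), ρ t) ^ m * (∫ t in Set.Ioi ((1-κ)^(m+1)*S), r t)
                    + (1 + ∫ t in Set.Ioi (0 : ℝ), r t) * (∫ t in Set.Ioi c, ρ t)
                      * ∑ k ∈ Finset.range m, (∫ t in Set.Ioi (0 : ℝ), ρ t) ^ k) := hmul
                _ = _ := by ring
            linarith
        _ = (∫ t in Set.Ioi (0 : ℝ), ρ t) ^ (m + 1) * (∫ t in Set.Ioi ((1-κ)^(m+1)*S), r t)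
              + (1 + ∫ t in Set.Ioi (0 : ℝ), r t) * (∫ t in Set.Ioi c, ρ t)
                * (1 + (∫ t in Set.Ioi (0 : ℝ), ρ t) * ∑ k ∈ Finset.range m, (∫ t in Set.Ioi (0 : ℝ), ρ t) ^ k) := by
            ring
        _ = _ := by rw [hgeom]

/-- Let `ρ : (0,∞) → [0,∞)` be a nonnegative `L¹` function with
`‖ρ‖_{L¹} < 1`, and let `r : (0,∞) → [0,∞)` be a nonnegative `L¹` function solving the
linear Volterra equation `r(t) = ρ(t) + ∫_0^t r(t−s) ρ(s) ds` for a.e. `t > 0`.  Then for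
every `T > 0` and `κ ∈ (0,1)`:
`∫_T^∞ r ≤ ‖r‖_{L¹} · T^{−log(1/‖ρ‖_{L¹})}
      + ((1 + 2‖r‖_{L¹})/(1 − ‖ρ‖_{L¹})) · ∫_{κ T^{1+log(1−κ)}}^∞ ρ`. -/
theorem volterra_resolvent_tail_estimate
    (ρ r : ℝ → ℝ)
    (hρmeas : Measurable ρ) (hrmeas : Measurable r)
    (hρ0 : ∀ t ∈ Set.Ioi (0 : ℝ), 0 ≤ ρ t)
    (hr0 : ∀ t ∈ Set.Ioi (0 : ℝ), 0 ≤ r t)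
    (hρint : IntegrableOn ρ (Set.Ioi 0))
    (hrint : IntegrableOn r (Set.Ioi 0))
    (hρ1 : (∫ t in Set.Ioi (0 : ℝ), ρ t) < 1)
    (hVolterra : ∀ᵐ t ∂(volume.restrict (Set.Ioi (0 : ℝ))),
        r t = ρ t + ∫ s in (0 : ℝ)..t, r (t - s) * ρ s)
    (T κ : ℝ) (hT : 0 < T) (hκ : κ ∈ Set.Ioo (0 : ℝ) 1) :
    (∫ t in Set.Ioi T, r t) ≤
      (∫ t in Set.Ioi (0 : ℝ), r t) * T ^ (-(Real.log (1 / ∫ t in Set.Ioi (0 : ℝ), ρ t)))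
        + ((1 + 2 * ∫ t in Set.Ioi (0 : ℝ), r t) / (1 - ∫ t in Set.Ioi (0 : ℝ), ρ t)) *
            ∫ t in Set.Ioi (κ * T ^ (1 + Real.log (1 - κ))), ρ t := by
  obtain ⟨hκ0, hκ1⟩ := hκ
  have h1κ : (0:ℝ) < 1 - κ := by linarith
  set A : ℝ := ∫ t in Set.Ioi (0 : ℝ), ρ t with hA
  set R : ℝ := ∫ t in Set.Ioi (0 : ℝ), r t with hR
  set c : ℝ := κ * T ^ (1 + Real.log (1 - κ)) with hc
  have hc0 : 0 < c := mul_pos hκ0 (Real.rpow_pos_of_pos hT _)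
  have hA0 : 0 ≤ A := setIntegral_nonneg measurableSet_Ioi hρ0
  have hR0 : 0 ≤ R := setIntegral_nonneg measurableSet_Ioi hr0
  have hPc0 : 0 ≤ ∫ t in Set.Ioi c, ρ t :=
    setIntegral_nonneg measurableSet_Ioi fun t ht => hρ0 t (lt_trans hc0 ht)
  have hcoef2 : 0 ≤ (1 + 2 * R) / (1 - A) := div_nonneg (by linarith) (by linarith)
  have hrnnae : ∀ x : ℝ, 0 < x → 0 ≤ᵐ[volume.restrict (Set.Ioi x)] r := fun x hx =>
    (ae_restrict_iff' measurableSet_Ioi).2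
      (Filter.Eventually.of_forall fun t ht => hr0 t (lt_trans hx ht))
  have hFleR : ∀ x : ℝ, 0 < x → (∫ t in Set.Ioi x, r t) ≤ R := by
    intro x hx
    exact setIntegral_mono_set hrint
      ((ae_restrict_iff' measurableSet_Ioi).2 (Filter.Eventually.of_forall hr0))
      ((Ioi_subset_Ioi hx.le).eventuallyLE)
  have hF0 : ∀ x : ℝ, 0 < x → 0 ≤ ∫ t in Set.Ioi x, r t := fun x hx =>
    setIntegral_nonneg_of_ae_restrict (hrnnae x hx)
  by_cases hmain : 0 < A ∧ 1 < T
  · obtain ⟨hApos, hT1⟩ := hmain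
    have hlogT : 0 < Real.log T := Real.log_pos hT1
    have hlogA : Real.log A < 0 := Real.log_neg hApos hρ1
    have hL : Real.log (1 - κ) < 0 := Real.log_neg h1κ (by linarith)
    set n : ℕ := ⌈Real.log T⌉₊ with hn
    have hck : ∀ k < n, c ≤ κ * (1 - κ) ^ k * T := by
      intro k hk
      have hkT : (k : ℝ) < Real.log T := Nat.lt_ceil.1 hk
      have key : T ^ (1 + Real.log (1 - κ)) ≤ (1 - κ) ^ k * T := by
        have e1 : T ^ (1 + Real.log (1 - κ))
            = T * Real.exp (Real.log (1 - κ) * Real.log T) := by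
          rw [Real.rpow_add hT, Real.rpow_one, Real.rpow_def_of_pos hT, mul_comm (Real.log T)]
        have e2 : (1 - κ) ^ k = Real.exp ((k : ℝ) * Real.log (1 - κ)) := by
          rw [← Real.log_pow, Real.exp_log (by positivity)]
        rw [e1, e2]
        have : Real.log (1 - κ) * Real.log T ≤ (k : ℝ) * Real.log (1 - κ) := by
          nlinarith
        calc T * Real.exp (Real.log (1 - κ) * Real.log T)
            ≤ T * Real.exp ((k : ℝ) * Real.log (1 - κ)) := by
              exact mul_le_mul_of_nonneg_left (Real.exp_le_exp.2 this) hT.le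
          _ = Real.exp ((k : ℝ) * Real.log (1 - κ)) * T := by ring
      calc c = κ * T ^ (1 + Real.log (1 - κ)) := hc
        _ ≤ κ * ((1 - κ) ^ k * T) := mul_le_mul_of_nonneg_left key hκ0.le
        _ = κ * (1 - κ) ^ k * T := by ring
    have hiter := tail_iter_aux ρ r hρmeas hrmeas hρ0 hr0 hρint hrint hVolterra
      κ ⟨hκ0, hκ1⟩ n T hT c hc0 hck
    -- Bound the first term
    have hAn : A ^ n ≤ T ^ (-(Real.log (1 / A))) := by
      have he : -(Real.log (1 / A)) = Real.log A := by
        rw [one_div, Real.log_inv]; ring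
      rw [he, Real.rpow_def_of_pos hT]
      have e2 : A ^ n = Real.exp ((n : ℝ) * Real.log A) := by
        rw [← Real.log_pow, Real.exp_log (by positivity)]
      rw [e2]
      apply Real.exp_le_exp.2
      have hnT : Real.log T ≤ (n : ℝ) := Nat.le_ceil _
      nlinarith
    have hterm1 : A ^ n * (∫ t in Set.Ioi ((1 - κ) ^ n * T), r t)
        ≤ R * T ^ (-(Real.log (1 / A))) := by
      have hpos : (0:ℝ) < (1 - κ) ^ n * T := by positivity
      calc A ^ n * (∫ t in Set.Ioi ((1 - κ) ^ n * T), r t)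
          ≤ A ^ n * R := mul_le_mul_of_nonneg_left (hFleR _ hpos) (by positivity)
        _ ≤ T ^ (-(Real.log (1 / A))) * R :=
            mul_le_mul_of_nonneg_right hAn hR0
        _ = R * T ^ (-(Real.log (1 / A))) := by ring
    -- Bound the second term
    have hgeom : (∑ k ∈ Finset.range n, A ^ k) ≤ 1 / (1 - A) := by
      have h := geom_sum_mul A n
      have hAn0 : (0:ℝ) ≤ A ^ n := by positivity
      rw [le_div_iff₀ (by linarith : (0:ℝ) < 1 - A)]
      nlinarith
    have hsum0 : (0:ℝ) ≤ ∑ k ∈ Finset.range n, A ^ k :=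
      Finset.sum_nonneg fun k _ => by positivity
    have hterm2 : (1 + R) * (∫ t in Set.Ioi c, ρ t) * (∑ k ∈ Finset.range n, A ^ k)
        ≤ (1 + 2 * R) / (1 - A) * ∫ t in Set.Ioi c, ρ t := by
      have h1 : (1 + R) * (∫ t in Set.Ioi c, ρ t) * (∑ k ∈ Finset.range n, A ^ k)
          ≤ (1 + 2 * R) * (∫ t in Set.Ioi c, ρ t) * (1 / (1 - A)) := by
        apply mul_le_mul (by nlinarith) hgeom hsum0 (by nlinarith)
      calc (1 + R) * (∫ t in Set.Ioi c, ρ t) * (∑ k ∈ Finset.range n, A ^ k)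
          ≤ (1 + 2 * R) * (∫ t in Set.Ioi c, ρ t) * (1 / (1 - A)) := h1
        _ = (1 + 2 * R) / (1 - A) * ∫ t in Set.Ioi c, ρ t := by ring
    calc (∫ t in Set.Ioi T, r t)
        ≤ A ^ n * (∫ t in Set.Ioi ((1 - κ) ^ n * T), r t)
          + (1 + R) * (∫ t in Set.Ioi c, ρ t) * (∑ k ∈ Finset.range n, A ^ k) := hiter
      _ ≤ R * T ^ (-(Real.log (1 / A))) + (1 + 2 * R) / (1 - A) * ∫ t in Set.Ioi c, ρ t := by
          linarith
  · -- degenerate cases: A = 0 or T ≤ 1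
    have hone : (1:ℝ) ≤ T ^ (-(Real.log (1 / A))) := by
      rcases not_and_or.1 hmain with hA | hT1
      · have hAz : A = 0 := le_antisymm (not_lt.1 hA) hA0 |>.symm.symm
        rw [hAz]
        norm_num
      · push_neg at hT1
        have he : -(Real.log (1 / A)) ≤ 0 := by
          rw [one_div, Real.log_inv]
          simp only [neg_neg]
          rcases eq_or_lt_of_le hA0 with h | h
          · rw [← h]; simp
          · exact (Real.log_neg h hρ1).le
        exact Real.one_le_rpow_of_pos_of_le_one_of_nonpos hT hT1 he
    have h1 : (∫ t in Set.Ioi T, r t) ≤ R := hFleR T hT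
    have h2 : R ≤ R * T ^ (-(Real.log (1 / A))) := le_mul_of_one_le_right hR0 hone
    have h3 : 0 ≤ (1 + 2 * R) / (1 - A) * ∫ t in Set.Ioi c, ρ t :=
      mul_nonneg hcoef2 hPc0
    linarith
end

section
/- Let μ be a σ-finite Borel measure on [0,∞), V a separable Hilbert space, δ ∈ ℝ and η' < η. Then for every strongly measurable y : [0,∞) → V with |||y|||_{δ,η'} < ∞ and every t > 0: ∫_{[0,∞)} e^{−2xt} ‖y(x)‖_V² w_{δ,η}(x) μ(dx) ≤ max{μ({0}), 1, C(η−η')} · (1 + t^{−(η−η')}) · |||y|||_{δ,η'}², where C(ϱ) = 2^{−ϱ} ϱ^{ϱ} e^{−ϱ}. -/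
open MeasureTheory Set

/-- The weight function `w_{δ,η}` on `[0,∞)`: `w_{δ,η}(0) = 1`, `w_{δ,η}(x) = x^{−δ}` for
`x ∈ (0,1]` and `w_{δ,η}(x) = x^{η}` for `x ∈ (1,∞)`. -/
noncomputable def weightW (δ η x : ℝ) : ℝ :=
  if x = 0 then 1 else if x ≤ 1 then x ^ (-δ) else x ^ η

/-- The constant `C(ϱ) = 2^{−ϱ} ϱ^{ϱ} e^{−ϱ}`. -/
noncomputable def constC (ϱ : ℝ) : ℝ := 2 ^ (-ϱ) * ϱ ^ ϱ * Real.exp (-ϱ)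

lemma aux_pow_exp {u ρ : ℝ} (hu : 0 < u) (hρ : 0 < ρ) :
    u ^ ρ * Real.exp (-u) ≤ ρ ^ ρ * Real.exp (-ρ) := by
  have h := Real.log_le_sub_one_of_pos (div_pos hu hρ)
  rw [Real.log_div hu.ne' hρ.ne'] at h
  have key : ρ * Real.log u - u ≤ ρ * Real.log ρ - ρ := by
    have := mul_le_mul_of_nonneg_left h hρ.le
    nlinarith [mul_comm ρ (u / ρ), mul_div_cancel₀ u hρ.ne']
  calc u ^ ρ * Real.exp (-u) = Real.exp (ρ * Real.log u - u) := by
        rw [Real.rpow_def_of_pos hu, ← Real.exp_add]; ring_nf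
    _ ≤ Real.exp (ρ * Real.log ρ - ρ) := Real.exp_le_exp.mpr key
    _ = ρ ^ ρ * Real.exp (-ρ) := by
        rw [Real.rpow_def_of_pos hρ, ← Real.exp_add]; ring_nf

lemma aux_bound {ρ t x : ℝ} (hρ : 0 < ρ) (ht : 0 < t) (hx : 0 < x) :
    Real.exp (-2 * x * t) * x ^ ρ ≤ constC ρ * t ^ (-ρ) := by
  have h2t : (0:ℝ) < 2 * t := by linarith
  have hu : 0 < 2 * x * t := by positivity
  have h := aux_pow_exp hu hρ
  have hx' : x = (2 * x * t) / (2 * t) := by field_simp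
  have hxp : x ^ ρ = (2 * x * t) ^ ρ * (2 * t) ^ (-ρ) := by
    rw [Real.rpow_neg h2t.le, eq_mul_inv_iff_mul_eq₀ (by positivity : ((2*t):ℝ)^ρ ≠ 0), ← Real.mul_rpow hx.le h2t.le]
    ring_nf
  have h2 : (2 * t) ^ (-ρ) = 2 ^ (-ρ) * t ^ (-ρ) :=
    Real.mul_rpow (by norm_num) ht.le
  have hpos : (0:ℝ) < (2:ℝ) ^ (-ρ) * t ^ (-ρ) := by positivity
  calc Real.exp (-2 * x * t) * x ^ ρ
      = ((2 * x * t) ^ ρ * Real.exp (-(2 * x * t))) * (2 ^ (-ρ) * t ^ (-ρ)) := by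
        rw [hxp, h2]; ring_nf
    _ ≤ (ρ ^ ρ * Real.exp (-ρ)) * (2 ^ (-ρ) * t ^ (-ρ)) :=
        mul_le_mul_of_nonneg_right h hpos.le
    _ = constC ρ * t ^ (-ρ) := by unfold constC; ring

/-- Let `μ` be a σ-finite Borel measure on `[0,∞)`, `V` a separable Hilbert
space, `δ ∈ ℝ` and `η' < η`.  Then for every strongly measurable `y : [0,∞) → V` with
`|||y|||_{δ,η'} < ∞` and every `t > 0`:
`∫ e^{−2xt} ‖y(x)‖² w_{δ,η}(x) μ(dx)
  ≤ max{μ({0}), 1, C(η−η')} · (1 + t^{−(η−η')}) · |||y|||_{δ,η'}²`. -/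
theorem multiplication_semigroup_smoothing
    {V : Type*} [NormedAddCommGroup V] [InnerProductSpace ℝ V]
    [SecondCountableTopology V] [CompleteSpace V]
    (μ : Measure ℝ) [SigmaFinite μ]
    (δ η η' : ℝ) (hηη' : η' < η)
    (y : ℝ → V) (hy : StronglyMeasurable y)
    (hfin : IntegrableOn (fun x => ‖y x‖ ^ 2 * weightW δ η' x) (Set.Ici 0) μ)
    (t : ℝ) (ht : 0 < t) :
    (∫ x in Set.Ici (0 : ℝ), Real.exp (-2 * x * t) * ‖y x‖ ^ 2 * weightW δ η x ∂μ) ≤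
      max (max (μ {0}).toReal 1) (constC (η - η')) * (1 + t ^ (-(η - η'))) *
        ∫ x in Set.Ici (0 : ℝ), ‖y x‖ ^ 2 * weightW δ η' x ∂μ := by
  set ρ := η - η' with hρdef
  have hρ : 0 < ρ := by simp [hρdef]; linarith
  set K := max (max (μ {0}).toReal 1) (constC ρ) with hK
  have hK1 : (1:ℝ) ≤ K := le_trans (le_max_right _ 1) (le_max_left _ _)
  have hKC : constC ρ ≤ K := le_max_right _ _
  have htρ : 0 < t ^ (-ρ) := Real.rpow_pos_of_pos ht _
  have hc1 : (1:ℝ) ≤ K * (1 + t ^ (-ρ)) := by nlinarith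
  have hc2 : constC ρ * t ^ (-ρ) ≤ K * (1 + t ^ (-ρ)) := by
    have hC : 0 ≤ constC ρ := by unfold constC; positivity
    nlinarith
  -- pointwise bound on Ici 0
  have hpt : ∀ x ∈ Set.Ici (0:ℝ),
      Real.exp (-2 * x * t) * ‖y x‖ ^ 2 * weightW δ η x ≤
        K * (1 + t ^ (-ρ)) * (‖y x‖ ^ 2 * weightW δ η' x) := by
    intro x hx
    have hn : (0:ℝ) ≤ ‖y x‖ ^ 2 := sq_nonneg _
    rcases eq_or_lt_of_le (Set.mem_Ici.mp hx : (0:ℝ) ≤ x) with h0 | h0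
    · subst h0
      simp only [weightW]
      norm_num [Real.exp_zero]
      nlinarith [mul_le_mul_of_nonneg_right hc1 hn]
    · by_cases hle : x ≤ 1
      · simp only [weightW, if_neg h0.ne', if_pos hle]
        have hw : (0:ℝ) ≤ x ^ (-δ) := Real.rpow_nonneg h0.le _
        have he : Real.exp (-2 * x * t) ≤ 1 := by
          calc Real.exp (-2 * x * t) ≤ Real.exp 0 := Real.exp_le_exp.mpr (by nlinarith)
            _ = 1 := Real.exp_zero
        have := mul_le_mul_of_nonneg_right (mul_le_mul_of_nonneg_right he hn) hw
        calc Real.exp (-2 * x * t) * ‖y x‖ ^ 2 * x ^ (-δ)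
            ≤ 1 * ‖y x‖ ^ 2 * x ^ (-δ) := this
          _ = 1 * (‖y x‖ ^ 2 * x ^ (-δ)) := by ring
          _ ≤ K * (1 + t ^ (-ρ)) * (‖y x‖ ^ 2 * x ^ (-δ)) := by
              apply mul_le_mul_of_nonneg_right hc1 (by positivity)
      · simp only [weightW, if_neg h0.ne', if_neg hle]
        have hx1 : (1:ℝ) < x := lt_of_not_ge hle
        have hsplit : x ^ η = x ^ η' * x ^ ρ := by
          rw [← Real.rpow_add h0, hρdef]; ring_nf
        have hb := aux_bound hρ ht h0
        have hw' : (0:ℝ) ≤ x ^ η' := Real.rpow_nonneg h0.le _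
        calc Real.exp (-2 * x * t) * ‖y x‖ ^ 2 * x ^ η
            = (Real.exp (-2 * x * t) * x ^ ρ) * (‖y x‖ ^ 2 * x ^ η') := by
              rw [hsplit]; ring
          _ ≤ (constC ρ * t ^ (-ρ)) * (‖y x‖ ^ 2 * x ^ η') := by
              apply mul_le_mul_of_nonneg_right hb (by positivity)
          _ ≤ K * (1 + t ^ (-ρ)) * (‖y x‖ ^ 2 * x ^ η') := by
              apply mul_le_mul_of_nonneg_right hc2 (by positivity)
  -- measurability of weight
  have hwmeas : ∀ a : ℝ, Measurable (weightW δ a) := by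
    intro a
    unfold weightW
    apply Measurable.ite (measurableSet_eq) measurable_const
    exact Measurable.ite (measurableSet_le measurable_id measurable_const)
      (measurable_id.pow measurable_const) (measurable_id.pow measurable_const)
  have hmeasL : AEStronglyMeasurable
      (fun x => Real.exp (-2 * x * t) * ‖y x‖ ^ 2 * weightW δ η x)
      (μ.restrict (Set.Ici 0)) := by
    refine AEStronglyMeasurable.mul (AEStronglyMeasurable.mul ?_ ?_) ?_
    · exact (Real.measurable_exp.comp ((measurable_const.mul measurable_id).mul
        measurable_const) : Measurable fun x : ℝ => Real.exp (-2 * x * t)).aestronglyMeasurable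
    · exact ((hy.norm.measurable.pow_const 2).aestronglyMeasurable)
    · exact (hwmeas η).aestronglyMeasurable
  -- integrability of LHS
  have hLint : IntegrableOn
      (fun x => Real.exp (-2 * x * t) * ‖y x‖ ^ 2 * weightW δ η x) (Set.Ici 0) μ := by
    refine Integrable.mono' ((hfin.const_mul (K * (1 + t ^ (-ρ))))) hmeasL ?_
    rw [ae_restrict_iff' measurableSet_Ici]
    filter_upwards with x hx
    have hnn : 0 ≤ Real.exp (-2 * x * t) * ‖y x‖ ^ 2 * weightW δ η x := by
      have : 0 ≤ weightW δ η x := by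
        unfold weightW
        split_ifs
        · norm_num
        · exact Real.rpow_nonneg hx _
        · exact Real.rpow_nonneg hx _
      positivity
    rw [Real.norm_eq_abs, abs_of_nonneg hnn]
    exact hpt x hx
  calc (∫ x in Set.Ici (0 : ℝ), Real.exp (-2 * x * t) * ‖y x‖ ^ 2 * weightW δ η x ∂μ)
      ≤ ∫ x in Set.Ici (0 : ℝ), K * (1 + t ^ (-ρ)) * (‖y x‖ ^ 2 * weightW δ η' x) ∂μ :=
        setIntegral_mono_on hLint (hfin.const_mul _) measurableSet_Ici hpt
    _ = K * (1 + t ^ (-ρ)) * ∫ x in Set.Ici (0 : ℝ), ‖y x‖ ^ 2 * weightW δ η' x ∂μ :=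
        integral_const_mul _ _
end

section
/- Let μ be a σ-finite Borel measure on [0,∞), V a separable Hilbert space, and δ_*, η_* ∈ ℝ with ∫_{[0,∞)} w_{δ_*,η_*}(x)^{−1} μ(dx) < ∞. Let δ ≥ δ_* and η ∈ ℝ. Then there exists a constant C > 0 (depending only on μ, δ_*, η_*, δ, η) such that for every strongly measurable y : [0,∞) → V with |||y|||_{δ,η} < ∞ and every t > 0, the function x ↦ e^{−xt} y(x) is Bochner μ-integrable, and G(t) := ∫_{[0,∞)} e^{−xt} y(x) μ(dx) satisfies ‖G(t)‖_V ≤ C · (1 + t^{−max(η_*−η,0)/2}) · |||y|||_{δ,η}. -/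
open MeasureTheory Set

lemma weightW_pos {d e x : ℝ} (hx : 0 ≤ x) : 0 < weightW d e x := by
  unfold weightW
  rcases eq_or_lt_of_le hx with h | h
  · simp [← h]
  · rw [if_neg (ne_of_gt h)]
    split_ifs <;> exact Real.rpow_pos_of_pos h _

lemma weightW_measurable (d e : ℝ) : Measurable (weightW d e) := by
  have h1 : Measurable fun x : ℝ => x ^ (-d) := by measurability
  have h2 : Measurable fun x : ℝ => x ^ e := by measurability
  unfold weightW
  exact Measurable.ite measurableSet_eq measurable_const
    (Measurable.ite measurableSet_Iic h1 h2)

lemma exp_mul_rpow_le (a : ℝ) (ha : 0 ≤ a) {u : ℝ} (hu : 0 ≤ u) :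
    Real.exp (-u) * u ^ a ≤ 1 + ((Nat.ceil a).factorial : ℝ) := by
  have hfac : (1 : ℝ) ≤ ((Nat.ceil a).factorial : ℝ) := by
    exact_mod_cast Nat.one_le_iff_ne_zero.2 (Nat.factorial_ne_zero _)
  rcases le_or_gt u 1 with h | h
  · have h1 : u ^ a ≤ 1 := Real.rpow_le_one hu h ha
    have h2 : Real.exp (-u) ≤ 1 := Real.exp_le_one_iff.2 (by linarith)
    nlinarith [Real.exp_pos (-u), Real.rpow_nonneg hu a]
  · set n := Nat.ceil a with hn
    have h1 : u ^ a ≤ u ^ (n : ℝ) :=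
      Real.rpow_le_rpow_of_exponent_le h.le (Nat.le_ceil a)
    rw [Real.rpow_natCast] at h1
    have h2 : u ^ n ≤ n.factorial * Real.exp u := by
      have h3 := Real.pow_div_factorial_le_exp (x := u) hu n
      rw [div_le_iff₀ (by positivity)] at h3
      linarith
    calc Real.exp (-u) * u ^ a ≤ Real.exp (-u) * (n.factorial * Real.exp u) :=
          mul_le_mul_of_nonneg_left (h1.trans h2) (Real.exp_nonneg _)
      _ = n.factorial * (Real.exp (-u) * Real.exp u) := by ring
      _ = n.factorial := by rw [← Real.exp_add]; simp
      _ ≤ 1 + n.factorial := by linarith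

lemma key_pointwise (δs ηs δ η : ℝ) (hδ : δs ≤ δ) {x t : ℝ} (hx : 0 ≤ x) (ht : 0 < t) :
    Real.exp (-(x * t)) ^ 2 * (weightW δ η x)⁻¹ ≤
      (1 + ((Nat.ceil (max (ηs - η) 0)).factorial : ℝ)) * (1 + t ^ (-(max (ηs - η) 0))) *
        (weightW δs ηs x)⁻¹ := by
  set a : ℝ := max (ηs - η) 0 with ha_def
  have ha : 0 ≤ a := le_max_right _ _
  set K : ℝ := 1 + ((Nat.ceil a).factorial : ℝ) with hK_def
  have hfac : (1 : ℝ) ≤ ((Nat.ceil a).factorial : ℝ) := by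
    exact_mod_cast Nat.one_le_iff_ne_zero.2 (Nat.factorial_ne_zero _)
  have hta : 0 < t ^ (-a) := Real.rpow_pos_of_pos ht _
  have hF : (1 : ℝ) ≤ K * (1 + t ^ (-a)) := by nlinarith
  rcases eq_or_lt_of_le hx with h0 | h0
  · simp only [weightW, ← h0]
    norm_num
    nlinarith [Real.exp_pos (-(0 * t))]
  · rcases le_or_gt x 1 with h1 | h1
    · have hw : weightW δ η x = x ^ (-δ) := by
        rw [weightW, if_neg (ne_of_gt h0), if_pos h1]
      have hws : weightW δs ηs x = x ^ (-δs) := by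
        rw [weightW, if_neg (ne_of_gt h0), if_pos h1]
      have einv : ∀ c : ℝ, (x ^ (-c))⁻¹ = x ^ c := fun c => by
        rw [Real.rpow_neg h0.le, inv_inv]
      rw [hw, hws, einv, einv]
      have hle : x ^ δ ≤ x ^ δs := Real.rpow_le_rpow_of_exponent_ge h0 h1 hδ
      have he : Real.exp (-(x * t)) ^ 2 ≤ 1 := by
        have := Real.exp_le_one_iff.2 (show -(x * t) ≤ 0 by nlinarith)
        nlinarith [Real.exp_pos (-(x * t))]
      have hxs : 0 ≤ x ^ δs := Real.rpow_nonneg h0.le _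
      have hxd : 0 ≤ x ^ δ := Real.rpow_nonneg h0.le _
      calc Real.exp (-(x * t)) ^ 2 * x ^ δ ≤ 1 * x ^ δ := by
            exact mul_le_mul_of_nonneg_right he hxd
        _ = x ^ δ := one_mul _
        _ ≤ x ^ δs := hle
        _ = 1 * x ^ δs := (one_mul _).symm
        _ ≤ K * (1 + t ^ (-a)) * x ^ δs := mul_le_mul_of_nonneg_right hF hxs
    · -- x > 1
      have hw : weightW δ η x = x ^ η := by
        rw [weightW, if_neg (ne_of_gt h0), if_neg (not_le.2 h1)]
      have hws : weightW δs ηs x = x ^ ηs := by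
        rw [weightW, if_neg (ne_of_gt h0), if_neg (not_le.2 h1)]
      rw [hw, hws, ← Real.rpow_neg h0.le, ← Real.rpow_neg h0.le]
      have e1 : x ^ (-η) = x ^ (ηs - η) * x ^ (-ηs) := by
        rw [← Real.rpow_add h0]; ring_nf
      have e2 : x ^ (ηs - η) ≤ x ^ a :=
        Real.rpow_le_rpow_of_exponent_le h1.le (le_max_left _ _)
      have hxnns : (0 : ℝ) ≤ x ^ (-ηs) := Real.rpow_nonneg h0.le _
      have hmain : Real.exp (-(x * t)) ^ 2 * x ^ a ≤ K * (1 + t ^ (-a)) := by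
        set u : ℝ := 2 * (x * t) with hu_def
        have hu : 0 ≤ u := by positivity
        have hexp : Real.exp (-(x * t)) ^ 2 = Real.exp (-u) := by
          rw [sq, ← Real.exp_add]; congr 1; rw [hu_def]; ring
        have h2t : (0 : ℝ) < 2 * t := by linarith
        have hxa : x ^ a = u ^ a * ((2 * t) ^ a)⁻¹ := by
          have hxeq : x = u / (2 * t) := by field_simp [hu_def]; ring
          rw [hxeq, Real.div_rpow hu h2t.le, div_eq_mul_inv]
        have hKb : Real.exp (-u) * u ^ a ≤ K := exp_mul_rpow_le a ha hu
        have hinv : ((2 * t) ^ a)⁻¹ ≤ t ^ (-a) := by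
          rw [Real.rpow_neg ht.le]
          have : t ^ a ≤ (2 * t) ^ a :=
            Real.rpow_le_rpow ht.le (by linarith) ha
          exact inv_anti₀ (Real.rpow_pos_of_pos ht _) this
        have hinv0 : (0 : ℝ) ≤ ((2 * t) ^ a)⁻¹ := by positivity
        calc Real.exp (-(x * t)) ^ 2 * x ^ a
            = Real.exp (-u) * u ^ a * ((2 * t) ^ a)⁻¹ := by
              rw [hexp, hxa]; ring
          _ ≤ K * ((2 * t) ^ a)⁻¹ := mul_le_mul_of_nonneg_right hKb hinv0
          _ ≤ K * t ^ (-a) := by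
              apply mul_le_mul_of_nonneg_left hinv; nlinarith
          _ ≤ K * (1 + t ^ (-a)) := by nlinarith
      calc Real.exp (-(x * t)) ^ 2 * x ^ (-η)
          = Real.exp (-(x * t)) ^ 2 * x ^ (ηs - η) * x ^ (-ηs) := by rw [e1]; ring
        _ ≤ Real.exp (-(x * t)) ^ 2 * x ^ a * x ^ (-ηs) := by
            apply mul_le_mul_of_nonneg_right _ hxnns
            exact mul_le_mul_of_nonneg_left e2 (sq_nonneg _)
        _ ≤ K * (1 + t ^ (-a)) * x ^ (-ηs) := mul_le_mul_of_nonneg_right hmain hxnns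

/-- Let `μ` be a σ-finite Borel measure on `[0,∞)`, `V` a separable Hilbert
space, and `δ_*, η_* ∈ ℝ` with `∫ w_{δ_*,η_*}(x)⁻¹ μ(dx) < ∞`.  Let `δ ≥ δ_*` and `η ∈ ℝ`.
Then there is a constant `C > 0` such that for every strongly measurable `y` with
`|||y|||_{δ,η} < ∞` and every `t > 0`, `x ↦ e^{−xt} y(x)` is Bochner `μ`-integrable and
`G(t) = ∫ e^{−xt} y(x) μ(dx)` satisfies
`‖G(t)‖ ≤ C (1 + t^{−max(η_*−η,0)/2}) |||y|||_{δ,η}`. -/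
theorem laplace_transform_bound
    {V : Type*} [NormedAddCommGroup V] [InnerProductSpace ℝ V]
    [SecondCountableTopology V] [CompleteSpace V]
    (μ : Measure ℝ) [SigmaFinite μ]
    (δs ηs δ η : ℝ)
    (hws : IntegrableOn (fun x => (weightW δs ηs x)⁻¹) (Set.Ici 0) μ)
    (hδ : δs ≤ δ) :
    ∃ C > (0 : ℝ), ∀ (y : ℝ → V), StronglyMeasurable y →
      IntegrableOn (fun x => ‖y x‖ ^ 2 * weightW δ η x) (Set.Ici 0) μ →
      ∀ t > (0 : ℝ),
        IntegrableOn (fun x => Real.exp (-(x * t)) • y x) (Set.Ici 0) μ ∧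
        ‖∫ x in Set.Ici (0 : ℝ), Real.exp (-(x * t)) • y x ∂μ‖ ≤
          C * (1 + t ^ (-(max (ηs - η) 0) / 2)) *
            Real.sqrt (∫ x in Set.Ici (0 : ℝ), ‖y x‖ ^ 2 * weightW δ η x ∂μ) := by
  classical
  set a : ℝ := max (ηs - η) 0 with ha_def
  have ha : 0 ≤ a := le_max_right _ _
  set K : ℝ := 1 + ((Nat.ceil a).factorial : ℝ) with hK_def
  have hfac : (1 : ℝ) ≤ ((Nat.ceil a).factorial : ℝ) := by
    exact_mod_cast Nat.one_le_iff_ne_zero.2 (Nat.factorial_ne_zero _)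
  have hK0 : 0 < K := by nlinarith
  set I : ℝ := ∫ x in Set.Ici (0 : ℝ), (weightW δs ηs x)⁻¹ ∂μ with hI_def
  have hI0 : 0 ≤ I :=
    setIntegral_nonneg measurableSet_Ici fun x hx => inv_nonneg.2 (weightW_pos hx).le
  refine ⟨1 + Real.sqrt (K * I), by positivity, ?_⟩
  intro y hy hy2 t ht
  set ν : Measure ℝ := μ.restrict (Set.Ici 0) with hν_def
  set w : ℝ → ℝ := weightW δ η with hw_def
  set f1 : ℝ → ℝ := fun x => Real.exp (-(x * t)) * Real.sqrt (w x)⁻¹ with hf1_def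
  set f2 : ℝ → ℝ := fun x => ‖y x‖ * Real.sqrt (w x) with hf2_def
  have hwm : Measurable w := weightW_measurable δ η
  have hf1m : Measurable f1 :=
    (Real.measurable_exp.comp ((measurable_id.mul_const t).neg)).mul hwm.inv.sqrt
  have hf2m : StronglyMeasurable f2 := (hy.norm.mul hwm.sqrt.stronglyMeasurable)
  have hmem : ∀ᵐ x ∂ν, x ∈ Set.Ici (0 : ℝ) := ae_restrict_mem measurableSet_Ici
  -- the integrable bound for f1 ^ 2
  have hbound : Integrable (fun x => K * (1 + t ^ (-a)) * (weightW δs ηs x)⁻¹) ν :=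
    hws.const_mul _
  have hle : ∀ᵐ x ∂ν, f1 x ^ 2 ≤ K * (1 + t ^ (-a)) * (weightW δs ηs x)⁻¹ := by
    filter_upwards [hmem] with x hx
    have hwpos : 0 < w x := weightW_pos hx
    have : f1 x ^ 2 = Real.exp (-(x * t)) ^ 2 * (w x)⁻¹ := by
      rw [hf1_def]; simp only; rw [mul_pow, Real.sq_sqrt (inv_nonneg.2 hwpos.le)]
    rw [this]
    exact key_pointwise δs ηs δ η hδ hx ht
  have h1sq : Integrable (fun x => f1 x ^ 2) ν := by
    refine hbound.mono' ((hf1m.pow_const 2).aestronglyMeasurable) ?_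
    filter_upwards [hle] with x hx
    rw [Real.norm_of_nonneg (sq_nonneg _)]; exact hx
  have h2sq : Integrable (fun x => f2 x ^ 2) ν := by
    refine hy2.congr ?_
    filter_upwards [hmem] with x hx
    rw [hf2_def]; simp only
    rw [mul_pow, Real.sq_sqrt (weightW_pos hx).le]
  have hf1mem : MemLp f1 2 ν :=
    (memLp_two_iff_integrable_sq hf1m.aestronglyMeasurable).2 h1sq
  have hf2mem : MemLp f2 2 ν :=
    (memLp_two_iff_integrable_sq hf2m.aestronglyMeasurable).2 h2sq
  -- integrability of f1 * f2
  have hmul : Integrable (fun x => f1 x * f2 x) ν := by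
    have h := hf2mem.smul (r := 1) hf1mem
    rw [memLp_one_iff_integrable] at h
    exact h.congr (Filter.Eventually.of_forall fun x => by simp [smul_eq_mul])
  -- equality ‖g x‖ = f1 x * f2 x on Ici 0
  have heq : ∀ᵐ x ∂ν, ‖Real.exp (-(x * t)) • y x‖ = f1 x * f2 x := by
    filter_upwards [hmem] with x hx
    have hwpos : 0 < w x := weightW_pos hx
    have hs : Real.sqrt (w x)⁻¹ * Real.sqrt (w x) = 1 := by
      rw [← Real.sqrt_mul (inv_nonneg.2 hwpos.le), inv_mul_cancel₀ (ne_of_gt hwpos),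
        Real.sqrt_one]
    rw [norm_smul, Real.norm_eq_abs, abs_of_pos (Real.exp_pos _)]
    rw [hf1_def, hf2_def]; simp only
    calc Real.exp (-(x * t)) * ‖y x‖
        = Real.exp (-(x * t)) * ‖y x‖ * (Real.sqrt (w x)⁻¹ * Real.sqrt (w x)) := by
          rw [hs, mul_one]
      _ = Real.exp (-(x * t)) * Real.sqrt (w x)⁻¹ * (‖y x‖ * Real.sqrt (w x)) := by ring
  have hgm : AEStronglyMeasurable (fun x => Real.exp (-(x * t)) • y x) ν :=
    ((Real.measurable_exp.comp ((measurable_id.mul_const t).neg)).aestronglyMeasurable).smul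
      hy.aestronglyMeasurable
  have hg : Integrable (fun x => Real.exp (-(x * t)) • y x) ν := by
    refine hmul.mono' hgm ?_
    filter_upwards [heq] with x hx
    rw [hx]
  refine ⟨hg, ?_⟩
  -- Hölder
  have hconj : Real.HolderConjugate 2 2 := Real.HolderConjugate.two_two
  have h2e : ENNReal.ofReal (2 : ℝ) = 2 := by norm_num
  have hholder := integral_mul_le_Lp_mul_Lq_of_nonneg hconj
    (Filter.Eventually.of_forall fun x => mul_nonneg (Real.exp_nonneg _) (Real.sqrt_nonneg _))
    (Filter.Eventually.of_forall fun x => mul_nonneg (norm_nonneg _) (Real.sqrt_nonneg _))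
    (h2e ▸ hf1mem) (h2e ▸ hf2mem)
  simp_rw [Real.rpow_two] at hholder
  -- bound on ∫ f1 ^ 2
  have hA : ∫ x, f1 x ^ 2 ∂ν ≤ K * (1 + t ^ (-a)) * I := by
    have := integral_mono_ae h1sq hbound hle
    rwa [integral_const_mul] at this
  have hA0 : 0 ≤ ∫ x, f1 x ^ 2 ∂ν := integral_nonneg fun x => sq_nonneg _
  have hB0 : 0 ≤ ∫ x, f2 x ^ 2 ∂ν := integral_nonneg fun x => sq_nonneg _
  -- translate ∫ f2^2 to the target integral
  have hBeq : ∫ x, f2 x ^ 2 ∂ν = ∫ x in Set.Ici (0 : ℝ), ‖y x‖ ^ 2 * weightW δ η x ∂μ := by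
    refine integral_congr_ae ?_
    filter_upwards [hmem] with x hx
    rw [hf2_def]; simp only
    rw [mul_pow, Real.sq_sqrt (weightW_pos hx).le]
  -- put the pieces together
  have hsqrt_half : ∀ A : ℝ, 0 ≤ A → A ^ ((1 : ℝ) / 2) = Real.sqrt A := by
    intro A hA'; rw [Real.sqrt_eq_rpow]
  have hta : 0 < t ^ (-a) := Real.rpow_pos_of_pos ht _
  have hsq1 : (∫ x, f1 x ^ 2 ∂ν) ^ ((1 : ℝ) / 2) ≤
      Real.sqrt (K * I) * (1 + t ^ (-a / 2)) := by
    rw [hsqrt_half _ hA0]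
    have h1 : Real.sqrt (∫ x, f1 x ^ 2 ∂ν) ≤ Real.sqrt (K * (1 + t ^ (-a)) * I) :=
      Real.sqrt_le_sqrt hA
    have h2 : K * (1 + t ^ (-a)) * I = (K * I) * (1 + t ^ (-a)) := by ring
    rw [h2, Real.sqrt_mul (by positivity)] at h1
    have h3 : Real.sqrt (1 + t ^ (-a)) ≤ 1 + t ^ (-a / 2) := by
      have hts : Real.sqrt (t ^ (-a)) = t ^ (-a / 2) := by
        rw [Real.sqrt_eq_rpow, ← Real.rpow_mul ht.le]
        congr 1; ring
      have h4 : 1 + t ^ (-a) ≤ (1 + Real.sqrt (t ^ (-a))) ^ 2 := by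
        nlinarith [Real.sq_sqrt hta.le, Real.sqrt_nonneg (t ^ (-a))]
      calc Real.sqrt (1 + t ^ (-a)) ≤ Real.sqrt ((1 + Real.sqrt (t ^ (-a))) ^ 2) :=
            Real.sqrt_le_sqrt h4
        _ = 1 + Real.sqrt (t ^ (-a)) := Real.sqrt_sq (by positivity)
        _ = 1 + t ^ (-a / 2) := by rw [hts]
    calc Real.sqrt (∫ x, f1 x ^ 2 ∂ν)
        ≤ Real.sqrt (K * I) * Real.sqrt (1 + t ^ (-a)) := h1
      _ ≤ Real.sqrt (K * I) * (1 + t ^ (-a / 2)) :=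
          mul_le_mul_of_nonneg_left h3 (Real.sqrt_nonneg _)
  have hnorm : ‖∫ x in Set.Ici (0 : ℝ), Real.exp (-(x * t)) • y x ∂μ‖ ≤
      ∫ x, f1 x * f2 x ∂ν := by
    calc ‖∫ x in Set.Ici (0 : ℝ), Real.exp (-(x * t)) • y x ∂μ‖
        ≤ ∫ x, ‖Real.exp (-(x * t)) • y x‖ ∂ν := norm_integral_le_integral_norm _
      _ = ∫ x, f1 x * f2 x ∂ν := integral_congr_ae heq
  have hfinal : ‖∫ x in Set.Ici (0 : ℝ), Real.exp (-(x * t)) • y x ∂μ‖ ≤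
      Real.sqrt (K * I) * (1 + t ^ (-a / 2)) *
        Real.sqrt (∫ x in Set.Ici (0 : ℝ), ‖y x‖ ^ 2 * weightW δ η x ∂μ) := by
    calc ‖∫ x in Set.Ici (0 : ℝ), Real.exp (-(x * t)) • y x ∂μ‖
        ≤ ∫ x, f1 x * f2 x ∂ν := hnorm
      _ ≤ (∫ x, f1 x ^ 2 ∂ν) ^ ((1 : ℝ) / 2) * (∫ x, f2 x ^ 2 ∂ν) ^ ((1 : ℝ) / 2) := hholder
      _ ≤ Real.sqrt (K * I) * (1 + t ^ (-a / 2)) * (∫ x, f2 x ^ 2 ∂ν) ^ ((1 : ℝ) / 2) := by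
          apply mul_le_mul_of_nonneg_right hsq1
          rw [hsqrt_half _ hB0]; exact Real.sqrt_nonneg _
      _ = Real.sqrt (K * I) * (1 + t ^ (-a / 2)) *
            Real.sqrt (∫ x in Set.Ici (0 : ℝ), ‖y x‖ ^ 2 * weightW δ η x ∂μ) := by
          rw [hsqrt_half _ hB0, hBeq]
  refine hfinal.trans ?_
  have h1t : 0 ≤ 1 + t ^ (-a / 2) := by positivity
  have hsN : 0 ≤ Real.sqrt (∫ x in Set.Ici (0 : ℝ), ‖y x‖ ^ 2 * weightW δ η x ∂μ) :=
    Real.sqrt_nonneg _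
  have hCle : Real.sqrt (K * I) ≤ 1 + Real.sqrt (K * I) := by linarith [Real.sqrt_nonneg (K * I)]
  apply mul_le_mul_of_nonneg_right _ hsN
  exact mul_le_mul_of_nonneg_right hCle h1t
end

section
/- Let δ, η ∈ ℝ and let (y, y') be as in the context with N_{δ,η}(y) < ∞. Then: (i) for every z ∈ (0,∞), ‖y(z)‖_V ≤ N_{δ,η}(y) · (1 + (∫_{min(1,z)}^{max(1,z)} v_{δ,η}(x)^{−1} dx)^{1/2}); and (ii) if η < 1 then y' is Bochner integrable on (0,1) with ∫_0^1 ‖y'(x)‖_V dx ≤ (1−η)^{−1/2} N_{δ,η}(y), so that y(0) := y(1) − ∫_0^1 y'(x) dx is well defined and satisfies ‖y(0)‖_V ≤ (1 + (1−η)^{−1/2}) · N_{δ,η}(y). -/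
open MeasureTheory Set
open scoped ENNReal NNReal

/-- The weight function `v_{δ,η}` on `(0,∞)`: `v_{δ,η}(x) = x^{η}` for `x ∈ (0,1]` and
`v_{δ,η}(x) = x^{δ}` for `x ∈ (1,∞)`. -/
noncomputable def weightV (δ η x : ℝ) : ℝ :=
  if x ≤ 1 then x ^ η else x ^ δ

lemma weightV_pos {δ η x : ℝ} (hx : 0 < x) : 0 < weightV δ η x := by
  unfold weightV; split <;> exact Real.rpow_pos_of_pos hx _

lemma weightV_continuousOn (δ η : ℝ) : ContinuousOn (weightV δ η) (Ioi 0) := by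
  unfold weightV
  apply ContinuousOn.if
  · intro a ha
    have h1 : a = 1 := by
      have := ha.2
      rw [show {a : ℝ | a ≤ 1} = Iic 1 from rfl, frontier_Iic] at this
      simpa using this
    simp [h1]
  · exact ContinuousOn.rpow_const continuousOn_id (fun x hx => Or.inl hx.1.ne')
  · exact ContinuousOn.rpow_const continuousOn_id (fun x hx => Or.inl hx.1.ne')

lemma weightV_inv_continuousOn (δ η : ℝ) :
    ContinuousOn (fun x => (weightV δ η x)⁻¹) (Ioi 0) :=
  (weightV_continuousOn δ η).inv₀ (fun _ hx => (weightV_pos hx).ne')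

lemma weightV_inv_integrableOn (δ η : ℝ) {c : ℝ} (C : ℝ) (hc : 0 < c) :
    IntegrableOn (fun x => (weightV δ η x)⁻¹) (Ioc c C) := by
  have hsub : Icc c (max c C) ⊆ Ioi 0 := fun x hx => lt_of_lt_of_le hc hx.1
  have h := ((weightV_inv_continuousOn δ η).mono hsub).integrableOn_Icc (μ := volume)
  exact h.mono_set (fun x hx => ⟨hx.1.le, le_max_of_le_right hx.2⟩)

lemma holder_aux {V : Type*} [NormedAddCommGroup V] (δ η : ℝ) (y' : ℝ → V) {s : Set ℝ}
    (hs : MeasurableSet s) (hs0 : s ⊆ Ioi 0)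
    (hm : AEStronglyMeasurable y' (volume.restrict s))
    (h2 : IntegrableOn (fun x => ‖y' x‖ ^ 2 * weightV δ η x) s)
    (hinv : IntegrableOn (fun x => (weightV δ η x)⁻¹) s) :
    IntegrableOn y' s ∧
      (∫ x in s, ‖y' x‖) ≤
        Real.sqrt (∫ x in s, ‖y' x‖ ^ 2 * weightV δ η x) *
          Real.sqrt (∫ x in s, (weightV δ η x)⁻¹) := by
  set μ := volume.restrict s with hμ
  set f : ℝ → ℝ := fun x => ‖y' x‖ * Real.sqrt (weightV δ η x) with hf
  set g : ℝ → ℝ := fun x => Real.sqrt ((weightV δ η x)⁻¹) with hg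
  have hmem : ∀ᵐ x ∂μ, x ∈ s := ae_restrict_mem hs
  have hv : ∀ x ∈ s, 0 < weightV δ η x := fun x hx => weightV_pos (hs0 hx)
  have hfg : ∀ᵐ x ∂μ, f x * g x = ‖y' x‖ := by
    filter_upwards [hmem] with x hx
    have h0 := hv x hx
    simp only [hf, hg, Real.sqrt_inv]
    rw [mul_assoc, mul_inv_cancel₀ (Real.sqrt_ne_zero'.mpr h0), mul_one]
  have hfsq : ∀ᵐ x ∂μ, ‖y' x‖ ^ 2 * weightV δ η x = f x ^ 2 := by
    filter_upwards [hmem] with x hx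
    simp only [hf]
    rw [mul_pow, Real.sq_sqrt (hv x hx).le]
  have hgsq : ∀ᵐ x ∂μ, (weightV δ η x)⁻¹ = g x ^ 2 := by
    filter_upwards [hmem] with x hx
    simp only [hg]
    rw [Real.sq_sqrt (inv_nonneg.mpr (hv x hx).le)]
  have hvm : AEMeasurable (weightV δ η) μ :=
    ((weightV_continuousOn δ η).mono hs0).aemeasurable hs
  have hfm : AEStronglyMeasurable f μ :=
    (hm.norm.aemeasurable.mul
      (Real.continuous_sqrt.measurable.comp_aemeasurable hvm)).aestronglyMeasurable
  have hgm : AEStronglyMeasurable g μ :=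
    (Real.continuous_sqrt.measurable.comp_aemeasurable hvm.inv).aestronglyMeasurable
  have hfmem : MemLp f 2 μ := (memLp_two_iff_integrable_sq hfm).mpr (h2.congr hfsq)
  have hgmem : MemLp g 2 μ := (memLp_two_iff_integrable_sq hgm).mpr (hinv.congr hgsq)
  have hpq : (1 : ℝ≥0∞) / 1 = 1 / 2 + 1 / 2 := by
    rw [ENNReal.div_add_div_same, one_add_one_eq_two, ENNReal.div_self two_ne_zero
      ENNReal.ofNat_ne_top, one_div_one]
  have hsm : MemLp (f • g) 1 μ := hgmem.smul hfmem
  have hprod : Integrable (fun x => f x * g x) μ := by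
    have := memLp_one_iff_integrable.mp hsm
    exact this
  have hnorm_int : Integrable (fun x => ‖y' x‖) μ := hprod.congr hfg
  have hint : IntegrableOn y' s := (integrable_norm_iff hm).mp hnorm_int
  refine ⟨hint, ?_⟩
  have hconj : (2 : ℝ).HolderConjugate 2 := Real.HolderConjugate.two_two
  have h2e : ENNReal.ofReal (2 : ℝ) = 2 := by norm_num
  have hineq := integral_mul_le_Lp_mul_Lq_of_nonneg hconj
    (Filter.Eventually.of_forall fun x => mul_nonneg (norm_nonneg _) (Real.sqrt_nonneg _))
    (Filter.Eventually.of_forall fun x => Real.sqrt_nonneg _)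
    (h2e ▸ hfmem) (h2e ▸ hgmem)
  have hr2 : ∀ t : ℝ, t ^ (2 : ℝ) = t ^ 2 := fun t => by
    rw [show (2 : ℝ) = ((2 : ℕ) : ℝ) by norm_num, Real.rpow_natCast]
  have hfint : (∫ x, f x ^ (2 : ℝ) ∂μ) = ∫ x in s, ‖y' x‖ ^ 2 * weightV δ η x := by
    simp_rw [hr2]
    exact (integral_congr_ae hfsq).symm
  have hgint : (∫ x, g x ^ (2 : ℝ) ∂μ) = ∫ x in s, (weightV δ η x)⁻¹ := by
    simp_rw [hr2]
    exact (integral_congr_ae hgsq).symm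
  calc (∫ x in s, ‖y' x‖) = ∫ x, f x * g x ∂μ := (integral_congr_ae hfg).symm
    _ ≤ (∫ x, f x ^ (2:ℝ) ∂μ) ^ ((1:ℝ)/2) * (∫ x, g x ^ (2:ℝ) ∂μ) ^ ((1:ℝ)/2) := hineq
    _ = Real.sqrt (∫ x in s, ‖y' x‖ ^ 2 * weightV δ η x) *
          Real.sqrt (∫ x in s, (weightV δ η x)⁻¹) := by
        rw [hfint, hgint, Real.sqrt_eq_rpow, Real.sqrt_eq_rpow]

/-- Let `δ, η ∈ ℝ` and let `(y, y')` be a pair with `y'` locally Bochner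
integrable on `(0,∞)`, `y(b) − y(a) = ∫_a^b y'`, and `N_{δ,η}(y) < ∞`, where
`N_{δ,η}(y)² = ‖y(1)‖² + ∫_0^∞ ‖y'(x)‖² v_{δ,η}(x) dx`.  Then:
(i) for every `z ∈ (0,∞)`,
  `‖y(z)‖ ≤ N_{δ,η}(y) (1 + (∫_{min(1,z)}^{max(1,z)} v_{δ,η}(x)⁻¹ dx)^{1/2})`;
(ii) if `η < 1` then `y'` is Bochner integrable on `(0,1)` with
  `∫_0^1 ‖y'‖ ≤ (1−η)^{−1/2} N_{δ,η}(y)`, so that `y(0) := y(1) − ∫_0^1 y'` satisfies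
  `‖y(0)‖ ≤ (1 + (1−η)^{−1/2}) N_{δ,η}(y)`. -/
theorem filipovic_point_evaluation_bounded
    {V : Type*} [NormedAddCommGroup V] [InnerProductSpace ℝ V]
    [SecondCountableTopology V] [CompleteSpace V]
    (δ η : ℝ) (y y' : ℝ → V)
    (hloc : ∀ a b : ℝ, 0 < a → IntegrableOn y' (Set.Ioc a b))
    (hftc : ∀ a b : ℝ, 0 < a → a ≤ b → y b - y a = ∫ x in a..b, y' x)
    (hfin : IntegrableOn (fun x => ‖y' x‖ ^ 2 * weightV δ η x) (Set.Ioi 0)) :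
    (∀ z : ℝ, 0 < z →
        ‖y z‖ ≤
          Real.sqrt (‖y 1‖ ^ 2 + ∫ x in Set.Ioi (0 : ℝ), ‖y' x‖ ^ 2 * weightV δ η x) *
            (1 + Real.sqrt (∫ x in Set.Ioc (min 1 z) (max 1 z), (weightV δ η x)⁻¹))) ∧
      (η < 1 →
        IntegrableOn y' (Set.Ioc 0 1) ∧
        (∫ x in Set.Ioc (0 : ℝ) 1, ‖y' x‖) ≤
          (1 - η) ^ (-(1 / 2 : ℝ)) *
            Real.sqrt (‖y 1‖ ^ 2 + ∫ x in Set.Ioi (0 : ℝ), ‖y' x‖ ^ 2 * weightV δ η x) ∧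
        ‖y 1 - ∫ x in Set.Ioc (0 : ℝ) 1, y' x‖ ≤
          (1 + (1 - η) ^ (-(1 / 2 : ℝ))) *
            Real.sqrt (‖y 1‖ ^ 2 + ∫ x in Set.Ioi (0 : ℝ), ‖y' x‖ ^ 2 * weightV δ η x)) := by
  set I : ℝ := ∫ x in Set.Ioi (0 : ℝ), ‖y' x‖ ^ 2 * weightV δ η x with hIdef
  set N : ℝ := Real.sqrt (‖y 1‖ ^ 2 + I) with hNdef
  have hI : 0 ≤ I :=
    setIntegral_nonneg measurableSet_Ioi
      (fun x hx => mul_nonneg (sq_nonneg _) (weightV_pos hx).le)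
  have hN0 : 0 ≤ N := Real.sqrt_nonneg _
  have hy1 : ‖y 1‖ ≤ N := by
    rw [show ‖y 1‖ = Real.sqrt (‖y 1‖ ^ 2) from (Real.sqrt_sq (norm_nonneg _)).symm]
    exact Real.sqrt_le_sqrt (le_add_of_nonneg_right hI)
  have hInn : ∀ s : Set ℝ, s ⊆ Ioi 0 →
      Real.sqrt (∫ x in s, ‖y' x‖ ^ 2 * weightV δ η x) ≤ N := by
    intro s hsub
    apply Real.sqrt_le_sqrt
    have h1 : (∫ x in s, ‖y' x‖ ^ 2 * weightV δ η x) ≤ I := by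
      apply setIntegral_mono_set hfin
      · filter_upwards [ae_restrict_mem measurableSet_Ioi] with x hx
        exact mul_nonneg (sq_nonneg _) (weightV_pos hx).le
      · exact HasSubset.Subset.eventuallyLE hsub
    nlinarith [sq_nonneg ‖y 1‖]
  constructor
  · intro z hz
    rcases le_or_gt z 1 with hz1 | hz1
    · rw [min_eq_right hz1, max_eq_left hz1]
      set s : Set ℝ := Ioc z 1 with hsdef
      have hsub : s ⊆ Ioi 0 := fun x hx => hz.trans hx.1
      obtain ⟨hint, hineq⟩ := holder_aux δ η y' measurableSet_Ioc hsub
        (hloc z 1 hz).aestronglyMeasurable (hfin.mono_set hsub)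
        (weightV_inv_integrableOn δ η 1 hz)
      have hdiff : y 1 - y z = ∫ x in s, y' x := by
        rw [hftc z 1 hz hz1, intervalIntegral.integral_of_le hz1]
      have hbd : ‖y 1 - y z‖ ≤ N * Real.sqrt (∫ x in s, (weightV δ η x)⁻¹) := by
        rw [hdiff]
        refine (norm_integral_le_integral_norm _).trans (hineq.trans ?_)
        exact mul_le_mul_of_nonneg_right (hInn s hsub) (Real.sqrt_nonneg _)
      calc ‖y z‖ = ‖y 1 - (y 1 - y z)‖ := by rw [sub_sub_cancel]
        _ ≤ ‖y 1‖ + ‖y 1 - y z‖ := norm_sub_le _ _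
        _ ≤ N + N * Real.sqrt (∫ x in s, (weightV δ η x)⁻¹) := add_le_add hy1 hbd
        _ = N * (1 + Real.sqrt (∫ x in s, (weightV δ η x)⁻¹)) := by ring
    · rw [min_eq_left hz1.le, max_eq_right hz1.le]
      set s : Set ℝ := Ioc 1 z with hsdef
      have hsub : s ⊆ Ioi 0 := fun x hx => one_pos.trans hx.1
      obtain ⟨hint, hineq⟩ := holder_aux δ η y' measurableSet_Ioc hsub
        (hloc 1 z one_pos).aestronglyMeasurable (hfin.mono_set hsub)
        (weightV_inv_integrableOn δ η z one_pos)
      have hdiff : y z - y 1 = ∫ x in s, y' x := by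
        rw [hftc 1 z one_pos hz1.le, intervalIntegral.integral_of_le hz1.le]
      have hbd : ‖y z - y 1‖ ≤ N * Real.sqrt (∫ x in s, (weightV δ η x)⁻¹) := by
        rw [hdiff]
        refine (norm_integral_le_integral_norm _).trans (hineq.trans ?_)
        exact mul_le_mul_of_nonneg_right (hInn s hsub) (Real.sqrt_nonneg _)
      calc ‖y z‖ = ‖y 1 + (y z - y 1)‖ := by rw [add_sub_cancel]
        _ ≤ ‖y 1‖ + ‖y z - y 1‖ := norm_add_le _ _
        _ ≤ N + N * Real.sqrt (∫ x in s, (weightV δ η x)⁻¹) := add_le_add hy1 hbd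
        _ = N * (1 + Real.sqrt (∫ x in s, (weightV δ η x)⁻¹)) := by ring
  · intro hη
    have hη1 : (0:ℝ) < 1 - η := by linarith
    have hsub : Ioc (0:ℝ) 1 ⊆ Ioi 0 := fun x hx => hx.1
    have hmU : Ioc (0:ℝ) 1 = ⋃ n : ℕ, Ioc (1/(n+1) : ℝ) 1 := by
      ext x
      simp only [mem_Ioc, mem_iUnion]
      constructor
      · rintro ⟨hx0, hx1⟩
        obtain ⟨n, hn⟩ := exists_nat_one_div_lt hx0
        exact ⟨n, hn, hx1⟩
      · rintro ⟨n, hn, hx1⟩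
        refine ⟨lt_trans (by positivity) hn, hx1⟩
    have hm : AEStronglyMeasurable y' (volume.restrict (Ioc (0:ℝ) 1)) := by
      rw [hmU, aestronglyMeasurable_iUnion_iff]
      exact fun n => (hloc _ 1 (by positivity)).aestronglyMeasurable
    have heq : EqOn (fun x : ℝ => x ^ (-η)) (fun x => (weightV δ η x)⁻¹) (Ioc (0:ℝ) 1) := by
      intro x hx
      simp only [weightV, if_pos hx.2]
      rw [Real.rpow_neg hx.1.le]
    have hinv : IntegrableOn (fun x => (weightV δ η x)⁻¹) (Ioc (0:ℝ) 1) := by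
      refine IntegrableOn.congr_fun ?_ heq measurableSet_Ioc
      exact (intervalIntegral.intervalIntegrable_rpow' (by linarith : (-1:ℝ) < -η)).1
    have hval : (∫ x in Ioc (0:ℝ) 1, (weightV δ η x)⁻¹) = (1 - η)⁻¹ := by
      rw [← setIntegral_congr_fun measurableSet_Ioc heq,
        ← intervalIntegral.integral_of_le zero_le_one,
        integral_rpow (Or.inl (by linarith : (-1:ℝ) < -η))]
      rw [Real.one_rpow, Real.zero_rpow (by linarith : -η + 1 ≠ 0)]
      rw [show -η + 1 = 1 - η by ring, sub_zero, one_div]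
    have hsq : Real.sqrt ((1 - η)⁻¹) = (1 - η) ^ (-(1/2) : ℝ) := by
      rw [Real.sqrt_eq_rpow, ← Real.rpow_neg_one (1 - η), ← Real.rpow_mul hη1.le]
      norm_num
    obtain ⟨hint, hineq⟩ := holder_aux δ η y' measurableSet_Ioc hsub hm
      (hfin.mono_set hsub) hinv
    rw [hval, hsq] at hineq
    have hmain : (∫ x in Set.Ioc (0:ℝ) 1, ‖y' x‖) ≤ (1 - η) ^ (-(1/2) : ℝ) * N := by
      refine hineq.trans ?_
      rw [mul_comm ((1 - η) ^ (-(1/2) : ℝ)) N]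
      exact mul_le_mul_of_nonneg_right (hInn _ hsub) (Real.rpow_nonneg hη1.le _)
    refine ⟨hint, hmain, ?_⟩
    calc ‖y 1 - ∫ x in Set.Ioc (0:ℝ) 1, y' x‖
        ≤ ‖y 1‖ + ‖∫ x in Set.Ioc (0:ℝ) 1, y' x‖ := norm_sub_le _ _
      _ ≤ N + ∫ x in Set.Ioc (0:ℝ) 1, ‖y' x‖ :=
          add_le_add hy1 (norm_integral_le_integral_norm _)
      _ ≤ N + (1 - η) ^ (-(1/2) : ℝ) * N := add_le_add_right hmain _
      _ = (1 + (1 - η) ^ (-(1/2) : ℝ)) * N := by ring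
end

section
/- Let 0 ≤ δ ≤ δ', 0 ≤ η ≤ η' and T > 0. Then there exists a constant C = C(T, δ, δ', η, η') > 0 such that for every pair (y, y') as in the context with N_{δ',η'}(y) < ∞ and every t ∈ (0, T]: ‖y(1+t)‖_V² + ∫_0^∞ ‖y'(x+t)‖_V² v_{δ,η}(x) dx ≤ C · (1 + t^{−(η'−η)}) · N_{δ',η'}(y)². (This expresses the smoothing bound ‖S(t)‖ ≲ 1 + t^{−(η'−η)/2} for the shift semigroup S(t)y(x) = y(x+t) from the modified Filipović space with weight v_{δ',η'} into the one with weight v_{δ,η}.) -/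
open MeasureTheory Set

lemma weightV_nonneg (δ η : ℝ) {x : ℝ} (hx : 0 ≤ x) : 0 ≤ weightV δ η x := by
  unfold weightV; split <;> exact Real.rpow_nonneg hx _

lemma weightV_key {δ δ' η η' : ℝ} (hδ0 : 0 ≤ δ) (hδ : δ ≤ δ') (hη0 : 0 ≤ η) (hη : η ≤ η')
    {x t : ℝ} (hx : 0 < x) (ht : 0 < t) :
    weightV δ η x ≤ (1 + t ^ (-(η' - η))) * weightV δ' η' (x + t) := by
  have hα : (0:ℝ) ≤ η' - η := by linarith
  have htα : (0:ℝ) ≤ t ^ (-(η' - η)) := Real.rpow_nonneg ht.le _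
  unfold weightV
  by_cases hx1 : x ≤ 1
  · by_cases hxt1 : x + t ≤ 1
    · rw [if_pos hx1, if_pos hxt1]
      have h1 : x ^ η ≤ (x + t) ^ η := Real.rpow_le_rpow hx.le (by linarith) hη0
      have h2 : (x + t) ^ η * t ^ (η' - η) ≤ (x + t) ^ η' := by
        have : (x + t) ^ η' = (x + t) ^ η * (x + t) ^ (η' - η) := by
          rw [← Real.rpow_add (by linarith)]; ring_nf
        rw [this]
        exact mul_le_mul_of_nonneg_left
          (Real.rpow_le_rpow ht.le (by linarith) hα) (Real.rpow_nonneg (by linarith) _)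
      have h3 : t ^ (η' - η) * t ^ (-(η' - η)) = 1 := by
        rw [← Real.rpow_add ht]; simp
      have h4 : (0:ℝ) ≤ (x + t) ^ η' := Real.rpow_nonneg (by linarith) _
      calc x ^ η ≤ (x + t) ^ η := h1
        _ = ((x + t) ^ η * t ^ (η' - η)) * t ^ (-(η' - η)) := by
            rw [mul_assoc, h3, mul_one]
        _ ≤ (x + t) ^ η' * t ^ (-(η' - η)) := mul_le_mul_of_nonneg_right h2 htα
        _ ≤ (1 + t ^ (-(η' - η))) * (x + t) ^ η' := by
            rw [mul_comm]; nlinarith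
    · rw [if_pos hx1, if_neg hxt1]
      have h1 : x ^ η ≤ 1 := Real.rpow_le_one hx.le hx1 hη0
      have h2 : (1:ℝ) ≤ (x + t) ^ δ' :=
        Real.one_le_rpow (by linarith) (le_trans hδ0 hδ)
      nlinarith
  · have hxt1 : ¬ (x + t ≤ 1) := by push_neg at hx1 ⊢; linarith
    rw [if_neg hx1, if_neg hxt1]
    push_neg at hx1
    have h1 : x ^ δ ≤ (x + t) ^ δ := Real.rpow_le_rpow hx.le (by linarith) hδ0
    have h2 : (x + t) ^ δ ≤ (x + t) ^ δ' :=
      Real.rpow_le_rpow_of_exponent_le (by linarith) hδ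
    have h4 : (0:ℝ) ≤ (x + t) ^ δ' := Real.rpow_nonneg (by linarith) _
    nlinarith

lemma shift_integral_eq (t : ℝ) (F : ℝ → ℝ) :
    ∫ x in Ioi t, F x = ∫ x in Ioi (0:ℝ), F (x + t) := by
  have hmap : Measure.map (· + t) volume = volume :=
    (measurePreserving_add_right volume t).map_eq
  have hpre : (· + t) ⁻¹' (Ioi t) = Ioi (0:ℝ) := by ext x; simp
  conv_lhs => rw [← hmap]
  rw [(measurableEmbedding_addRight t).setIntegral_map, hpre]

lemma shift_integrableOn (t : ℝ) {F : ℝ → ℝ} (h : IntegrableOn F (Ioi t)) :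
    IntegrableOn (fun x => F (x + t)) (Ioi (0:ℝ)) := by
  have hmap : Measure.map (· + t) volume = volume :=
    (measurePreserving_add_right volume t).map_eq
  have hpre : (· + t) ⁻¹' (Ioi t) = Ioi (0:ℝ) := by ext x; simp
  have := ((measurableEmbedding_addRight t).integrableOn_map_iff
    (f := F) (μ := volume) (s := Ioi t)).mp (by rwa [hmap])
  rwa [hpre] at this

lemma cs_bound {V : Type*} [NormedAddCommGroup V] (t : ℝ) (ht : 0 < t) (y' : ℝ → V)
    (hm : AEStronglyMeasurable y' (volume.restrict (Ioc 1 (1+t))))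
    (hsq : Integrable (fun x => ‖y' x‖ ^ 2) (volume.restrict (Ioc 1 (1+t)))) :
    (∫ x in Ioc 1 (1+t), ‖y' x‖) ^ 2 ≤ t * ∫ x in Ioc 1 (1+t), ‖y' x‖ ^ 2 := by
  set μ := volume.restrict (Ioc 1 (1+t)) with hμ
  haveI : IsFiniteMeasure μ := ⟨by
    rw [hμ, Measure.restrict_apply_univ]; exact measure_Ioc_lt_top⟩
  have hpq : (2:ℝ).HolderConjugate 2 := Real.holderConjugate_iff.mpr ⟨one_lt_two, by norm_num⟩
  have hf2 : MemLp (fun x => ‖y' x‖) (ENNReal.ofReal 2) μ := by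
    rw [show ENNReal.ofReal 2 = 2 by norm_num]
    exact (memLp_two_iff_integrable_sq hm.norm).mpr hsq
  have hg2 : MemLp (fun _ : ℝ => (1:ℝ)) (ENNReal.ofReal 2) μ := memLp_const 1
  have key := integral_mul_le_Lp_mul_Lq_of_nonneg hpq
    (Filter.Eventually.of_forall fun x => norm_nonneg _)
    (Filter.Eventually.of_forall fun _ => zero_le_one) hf2 hg2
  simp only [mul_one] at key
  have h2 : ∀ a : ℝ, ‖y' a‖ ^ (2:ℝ) = ‖y' a‖ ^ (2:ℕ) := fun a => by
    rw [show ((2:ℝ)) = ((2:ℕ):ℝ) by norm_num, Real.rpow_natCast]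
  have h2' : ∀ _a : ℝ, (1:ℝ) ^ (2:ℝ) = (1:ℝ) := fun _a => Real.one_rpow _
  simp only [h2, h2' 0] at key
  have h1 : ∫ _a, (1:ℝ) ∂μ = t := by
    rw [integral_const, smul_eq_mul, mul_one, hμ, measureReal_restrict_apply_univ,
      Real.volume_real_Ioc_of_le (by linarith)]
    ring
  rw [h1] at key
  have hS : 0 ≤ ∫ a, ‖y' a‖ ^ 2 ∂μ := integral_nonneg fun x => sq_nonneg _
  have hJ : 0 ≤ ∫ a, ‖y' a‖ ∂μ := integral_nonneg fun x => norm_nonneg _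
  calc (∫ x in Ioc 1 (1+t), ‖y' x‖) ^ 2
      ≤ ((∫ a, ‖y' a‖ ^ 2 ∂μ) ^ (1/2:ℝ) * t ^ (1/2:ℝ)) ^ 2 := by
        rw [hμ] at hJ key ⊢; exact pow_le_pow_left₀ hJ key 2
    _ = t * ∫ x in Ioc 1 (1+t), ‖y' x‖ ^ 2 := by
        rw [mul_pow, ← Real.rpow_natCast ((∫ a, ‖y' a‖ ^ 2 ∂μ) ^ (1/2:ℝ)) 2,
          ← Real.rpow_natCast (t ^ (1/2:ℝ)) 2, ← Real.rpow_mul hS, ← Real.rpow_mul ht.le]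
        norm_num [mul_comm]
        exact Or.inl rfl

set_option maxHeartbeats 1000000 in
/-- Let `0 ≤ δ ≤ δ'`, `0 ≤ η ≤ η'` and `T > 0`.  Then there exists a
constant `C = C(T,δ,δ',η,η') > 0` such that for every pair `(y,y')` (with `y'` locally
Bochner integrable, `y(b) − y(a) = ∫_a^b y'` and `N_{δ',η'}(y) < ∞`) and every
`t ∈ (0,T]`:
`‖y(1+t)‖² + ∫_0^∞ ‖y'(x+t)‖² v_{δ,η}(x) dx ≤ C (1 + t^{−(η'−η)}) N_{δ',η'}(y)²`. -/
theorem shift_semigroup_smoothing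
    {V : Type*} [NormedAddCommGroup V] [InnerProductSpace ℝ V]
    [SecondCountableTopology V] [CompleteSpace V]
    (δ δ' η η' T : ℝ)
    (hδ0 : 0 ≤ δ) (hδ : δ ≤ δ') (hη0 : 0 ≤ η) (hη : η ≤ η') (hT : 0 < T) :
    ∃ C > (0 : ℝ), ∀ (y y' : ℝ → V),
      (∀ a b : ℝ, 0 < a → IntegrableOn y' (Set.Ioc a b)) →
      (∀ a b : ℝ, 0 < a → a ≤ b → y b - y a = ∫ x in a..b, y' x) →
      IntegrableOn (fun x => ‖y' x‖ ^ 2 * weightV δ' η' x) (Set.Ioi 0) →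
      ∀ t ∈ Set.Ioc (0 : ℝ) T,
        ‖y (1 + t)‖ ^ 2 + (∫ x in Set.Ioi (0 : ℝ), ‖y' (x + t)‖ ^ 2 * weightV δ η x) ≤
          C * (1 + t ^ (-(η' - η))) *
            (‖y 1‖ ^ 2 + ∫ x in Set.Ioi (0 : ℝ), ‖y' x‖ ^ 2 * weightV δ' η' x) := by
  refine ⟨2 * T + 3, by linarith, fun y y' hloc hFTC hInt t ht => ?_⟩
  obtain ⟨ht0, htT⟩ := ht
  set K := 1 + t ^ (-(η' - η)) with hKdef
  have hK1 : (1:ℝ) ≤ K := by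
    have := Real.rpow_nonneg ht0.le (-(η' - η)); rw [hKdef]; linarith
  set I := ∫ x in Set.Ioi (0:ℝ), ‖y' x‖ ^ 2 * weightV δ' η' x with hIdef
  have hFnn : ∀ x ∈ Ioi (0:ℝ), 0 ≤ ‖y' x‖ ^ 2 * weightV δ' η' x := fun x hx =>
    mul_nonneg (sq_nonneg _) (weightV_nonneg _ _ (le_of_lt hx))
  have hFnn_ae : 0 ≤ᵐ[volume.restrict (Ioi (0:ℝ))] fun x => ‖y' x‖ ^ 2 * weightV δ' η' x :=
    (ae_restrict_iff' measurableSet_Ioi).mpr (Filter.Eventually.of_forall hFnn)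
  have hI0 : 0 ≤ I := setIntegral_nonneg measurableSet_Ioi hFnn
  -- the subset (1, 1+t] of (0,∞)
  have hsub : Ioc (1:ℝ) (1+t) ⊆ Ioi (0:ℝ) := fun x hx => lt_trans one_pos hx.1
  have hInt_sub : IntegrableOn (fun x => ‖y' x‖ ^ 2 * weightV δ' η' x) (Ioc 1 (1+t)) :=
    hInt.mono_set hsub
  have hw1 : ∀ x ∈ Ioc (1:ℝ) (1+t), (1:ℝ) ≤ weightV δ' η' x := by
    intro x hx
    unfold weightV
    rw [if_neg (not_le.mpr hx.1)]
    exact Real.one_le_rpow hx.1.le (le_trans hδ0 hδ)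
  have hm : AEStronglyMeasurable y' (volume.restrict (Ioc 1 (1+t))) :=
    (hloc 1 (1+t) one_pos).aestronglyMeasurable
  have hsq : Integrable (fun x => ‖y' x‖ ^ 2) (volume.restrict (Ioc 1 (1+t))) := by
    refine Integrable.mono' hInt_sub (hm.norm.pow 2) ?_
    refine (ae_restrict_iff' measurableSet_Ioc).mpr (Filter.Eventually.of_forall fun x hx => ?_)
    have h1 := hw1 x hx
    have h2 := sq_nonneg ‖y' x‖
    rw [Real.norm_of_nonneg h2]
    nlinarith
  -- S ≤ I
  set S := ∫ x in Ioc (1:ℝ) (1+t), ‖y' x‖ ^ 2 with hSdef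
  have hSI : S ≤ I := by
    have step1 : S ≤ ∫ x in Ioc (1:ℝ) (1+t), ‖y' x‖ ^ 2 * weightV δ' η' x := by
      refine setIntegral_mono_on hsq hInt_sub measurableSet_Ioc fun x hx => ?_
      have h1 := hw1 x hx
      have h2 := sq_nonneg ‖y' x‖
      nlinarith
    have step2 : (∫ x in Ioc (1:ℝ) (1+t), ‖y' x‖ ^ 2 * weightV δ' η' x) ≤ I :=
      setIntegral_mono_set hInt hFnn_ae (HasSubset.Subset.eventuallyLE hsub)
    linarith
  -- boundary term
  set J := ∫ x in Ioc (1:ℝ) (1+t), ‖y' x‖ with hJdef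
  have hJ2 : J ^ 2 ≤ t * S := cs_bound t ht0 y' hm hsq
  have hyeq : y (1+t) = y 1 + ∫ x in (1:ℝ)..(1+t), y' x := by
    have := hFTC 1 (1+t) one_pos (by linarith)
    rw [← this]; abel
  have hnormJ : ‖y (1+t)‖ ≤ ‖y 1‖ + J := by
    rw [hyeq]
    refine le_trans (norm_add_le _ _) (add_le_add_right ?_ _)
    rw [intervalIntegral.integral_of_le (by linarith : (1:ℝ) ≤ 1+t)]
    exact norm_integral_le_integral_norm _
  have hJ0 : 0 ≤ J := setIntegral_nonneg measurableSet_Ioc fun x _ => norm_nonneg _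
  have hS0 : 0 ≤ S := setIntegral_nonneg measurableSet_Ioc fun x _ => sq_nonneg _
  have hbd : ‖y (1+t)‖ ^ 2 ≤ 2 * ‖y 1‖ ^ 2 + 2 * T * I := by
    have h1 : ‖y (1+t)‖ ^ 2 ≤ (‖y 1‖ + J) ^ 2 :=
      pow_le_pow_left₀ (norm_nonneg _) hnormJ 2
    have h2 : t * S ≤ T * I := by nlinarith
    nlinarith [norm_nonneg (y 1), sq_nonneg (‖y 1‖ - J)]
  -- integral term
  set G := ∫ x in Set.Ioi (0:ℝ), ‖y' (x+t)‖ ^ 2 * weightV δ η x with hGdef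
  have hGK : G ≤ K * I := by
    by_cases hGi : IntegrableOn (fun x => ‖y' (x+t)‖ ^ 2 * weightV δ η x) (Ioi (0:ℝ))
    · have hFt : IntegrableOn (fun x => ‖y' (x+t)‖ ^ 2 * weightV δ' η' (x+t)) (Ioi (0:ℝ)) :=
        shift_integrableOn t (F := fun x => ‖y' x‖ ^ 2 * weightV δ' η' x)
          (hInt.mono_set (Ioi_subset_Ioi ht0.le))
      have step1 : G ≤ ∫ x in Ioi (0:ℝ), K * (‖y' (x+t)‖ ^ 2 * weightV δ' η' (x+t)) := by
        refine setIntegral_mono_on hGi (hFt.const_mul K) measurableSet_Ioi fun x hx => ?_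
        have hw := weightV_key hδ0 hδ hη0 hη (η' := η') hx ht0
        calc ‖y' (x+t)‖ ^ 2 * weightV δ η x
            ≤ ‖y' (x+t)‖ ^ 2 * (K * weightV δ' η' (x+t)) :=
              mul_le_mul_of_nonneg_left hw (sq_nonneg _)
          _ = K * (‖y' (x+t)‖ ^ 2 * weightV δ' η' (x+t)) := by ring
      have step2 : (∫ x in Ioi (0:ℝ), K * (‖y' (x+t)‖ ^ 2 * weightV δ' η' (x+t)))
          = K * ∫ x in Ioi t, ‖y' x‖ ^ 2 * weightV δ' η' x := by
        rw [integral_const_mul, shift_integral_eq t (fun x => ‖y' x‖ ^ 2 * weightV δ' η' x)]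
      have step3 : (∫ x in Ioi t, ‖y' x‖ ^ 2 * weightV δ' η' x) ≤ I :=
        setIntegral_mono_set hInt hFnn_ae (HasSubset.Subset.eventuallyLE (Ioi_subset_Ioi ht0.le))
      calc G ≤ K * ∫ x in Ioi t, ‖y' x‖ ^ 2 * weightV δ' η' x := by rw [← step2]; exact step1
        _ ≤ K * I := mul_le_mul_of_nonneg_left step3 (by linarith)
    · rw [hGdef, integral_undef hGi]
      positivity
  have ha0 : (0:ℝ) ≤ ‖y 1‖ ^ 2 := sq_nonneg _
  nlinarith [mul_nonneg (sub_nonneg.mpr hK1) ha0, mul_nonneg (sub_nonneg.mpr hK1) hI0,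
    mul_nonneg hT.le ha0, mul_nonneg hT.le hI0,
    mul_nonneg (mul_nonneg hT.le (sub_nonneg.mpr hK1)) hI0,
    mul_nonneg (mul_nonneg hT.le (sub_nonneg.mpr hK1)) ha0]
end
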